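/- arXiv:2205.04825 — 3 statements merged into one kernel-verified Lean document; each statement's English description precedes it below -/
import Mathlib

section
/- For a complete graph K_n with n ≥ 3 and a connected bipartite graph G, the connectivity of the direct product satisfies κ(G × K_n) = min{n·κ(G), (n−1)·δ(G)}. -/
open SimpleGraph

universe u v

variable {α : Type u} {β : Type v}

/-- Direct (tensor) product of two simple graphs. -/
def SimpleGraph.tensorProd (G : SimpleGraph α) (H : SimpleGraph β) :
    SimpleGraph (α × β) where
  Adj x y := G.Adj x.1 y.1 ∧ H.Adj x.2 y.2
  symm := ⟨fun x y h => ⟨h.1.symm, h.2.symm⟩⟩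
  loopless := ⟨fun x h => G.irrefl h.1⟩

/-- Direct (tensor) product of a family of simple graphs. -/
def SimpleGraph.piTensorProd {ι : Type*} {V : ι → Type*}
    (G : ∀ i, SimpleGraph (V i)) : SimpleGraph (∀ i, V i) where
  Adj f g := f ≠ g ∧ ∀ i, (G i).Adj (f i) (g i)
  symm := ⟨fun f g h => ⟨h.1.symm, fun i => (h.2 i).symm⟩⟩
  loopless := ⟨fun f h => h.1 rfl⟩

/-- `S` is a vertex cut of `G`: deleting `S` leaves a disconnected graph. -/
def SimpleGraph.IsVertexCut (G : SimpleGraph α) (S : Set α) : Prop :=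
  ¬ (G.induce Sᶜ).Connected

/-- Vertex connectivity: minimum size of a set `S` such that `G - S` is
disconnected or has at most one vertex. -/
noncomputable def SimpleGraph.vConn (G : SimpleGraph α) : ℕ :=
  sInf {n | ∃ S : Set α, S.ncard = n ∧
    (G.IsVertexCut S ∨ Nat.card α ≤ n + 1)}

/-- Minimum degree (via neighbor set cardinalities). -/
noncomputable def SimpleGraph.minDeg (G : SimpleGraph α) : ℕ :=
  sInf {d | ∃ v, (G.neighborSet v).ncard = d}

/-- A minimum vertex cut. -/
def SimpleGraph.IsMinVertexCut (G : SimpleGraph α) (S : Set α) : Prop :=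
  G.IsVertexCut S ∧ S.ncard = G.vConn

/-- `G` is super connected: every minimum vertex cut is the neighborhood of a
vertex of minimum degree. -/
def SimpleGraph.SuperConnected (G : SimpleGraph α) : Prop :=
  ∀ S : Set α, G.IsMinVertexCut S →
    ∃ v, (G.neighborSet v).ncard = G.minDeg ∧ S = G.neighborSet v

/-- `(X, Y)` is a bipartition of `G`. -/
def SimpleGraph.IsBipartition (G : SimpleGraph α) (X Y : Set α) : Prop :=
  Disjoint X Y ∧ X ∪ Y = Set.univ ∧
    ∀ u v, G.Adj u v → (u ∈ X ∧ v ∈ Y) ∨ (u ∈ Y ∧ v ∈ X)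

/-- The graph `G̃ₙ`: vertex set `α × ZMod n`, with for each `i` a copy `Hᵢ`
of `G` on `(Xᵢ, Yᵢ)` and a copy `Hᵢ'` of `G` on `(Xᵢ₊₁, Yᵢ)`. -/
def tildeG (G : SimpleGraph α) (X Y : Set α) (n : ℕ) :
    SimpleGraph (α × ZMod n) where
  Adj a b := G.Adj a.1 b.1 ∧
    ((a.1 ∈ X ∧ b.1 ∈ Y ∧ (a.2 = b.2 ∨ a.2 = b.2 + 1)) ∨
     (a.1 ∈ Y ∧ b.1 ∈ X ∧ (b.2 = a.2 ∨ b.2 = a.2 + 1)))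
  symm := ⟨fun a b h => ⟨h.1.symm, by tauto⟩⟩
  loopless := ⟨fun a h => G.irrefl h.1⟩
section gked
open Set

lemma gked_ncard_sprod (A : Set α) (B : Set β) : (A ×ˢ B).ncard = A.ncard * B.ncard := by
  rw [← Nat.card_coe_set_eq, ← Nat.card_coe_set_eq, ← Nat.card_coe_set_eq,
    Nat.card_congr (Equiv.Set.prod A B), Nat.card_prod]

def SimpleGraph.gdel (G : SimpleGraph α) (T : Set α) : SimpleGraph α where
  Adj x y := G.Adj x y ∧ x ∉ T ∧ y ∉ T
  symm := ⟨fun x y h => ⟨h.1.symm, h.2.2, h.2.1⟩⟩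
  loopless := ⟨fun x h => G.irrefl h.1⟩

lemma gked_reach_invariant {H : SimpleGraph α} {Q : α → Prop}
    (hQ : ∀ x y, Q x → H.Adj x y → Q y) {a b : α} (h : H.Reachable a b) (ha : Q a) : Q b := by
  obtain ⟨w⟩ := h
  induction w with
  | nil => exact ha
  | cons h p ih => exact ih (hQ _ _ ha h)

lemma gked_del_reachable_of_induce {G : SimpleGraph α} {T : Set α} {a b : ↥Tᶜ}
    (h : (G.induce Tᶜ).Reachable a b) : (G.gdel T).Reachable a.val b.val := by
  let f : G.induce Tᶜ →g G.gdel T :=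
    ⟨Subtype.val, fun {x y} hxy => ⟨hxy, x.property, y.property⟩⟩
  exact h.map f

lemma gked_induce_reachable_of_del {G : SimpleGraph α} {T : Set α} {a b : α}
    (w : (G.gdel T).Walk a b) (ha : a ∈ Tᶜ) (hb : b ∈ Tᶜ) :
    (G.induce Tᶜ).Reachable ⟨a, ha⟩ ⟨b, hb⟩ := by
  induction w with
  | nil => rfl
  | @cons x y z h p ih =>
    exact (SimpleGraph.Adj.reachable
      (by exact h.1 : (G.induce Tᶜ).Adj ⟨x, h.2.1⟩ ⟨y, h.2.2⟩)).trans (ih h.2.2 hb)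

lemma gked_connected_induce_compl_iff (G : SimpleGraph α) (T : Set α) :
    (G.induce Tᶜ).Connected ↔
      Tᶜ.Nonempty ∧ ∀ a ∈ Tᶜ, ∀ b ∈ Tᶜ, (G.gdel T).Reachable a b := by
  constructor
  · intro h
    refine ⟨?_, fun a ha b hb => gked_del_reachable_of_induce (h.preconnected ⟨a, ha⟩ ⟨b, hb⟩)⟩
    obtain ⟨⟨a, ha⟩⟩ := h.nonempty
    exact ⟨a, ha⟩
  · rintro ⟨⟨a, ha⟩, h⟩
    haveI : Nonempty ↥Tᶜ := ⟨⟨a, ha⟩⟩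
    refine ⟨fun x y => ?_⟩
    obtain ⟨w⟩ := h x.val x.property y.val y.property
    exact gked_induce_reachable_of_del w x.property y.property

lemma gked_isVertexCut_iff (G : SimpleGraph α) (T : Set α) :
    G.IsVertexCut T ↔ Tᶜ = ∅ ∨ ∃ a ∈ Tᶜ, ∃ b ∈ Tᶜ, ¬ (G.gdel T).Reachable a b := by
  rw [SimpleGraph.IsVertexCut, gked_connected_induce_compl_iff]
  constructor
  · intro h
    by_cases hc : Tᶜ = ∅
    · exact Or.inl hc
    · right
      rcases not_and_or.mp h with h1 | h2
      · exact absurd (Set.nonempty_iff_ne_empty.mpr hc) h1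
      · push_neg at h2
        exact h2
  · rintro (hc | ⟨a, ha, b, hb, hr⟩) ⟨hne, hreach⟩
    · rw [hc] at hne; exact Set.not_nonempty_empty hne
    · exact hr (hreach a ha b hb)

lemma gked_vConn_le_of_cut (G : SimpleGraph α) (T : Set α) (h : G.IsVertexCut T) :
    G.vConn ≤ T.ncard :=
  Nat.sInf_le ⟨T, rfl, Or.inl h⟩

lemma gked_vConn_set_nonempty (G : SimpleGraph α) :
    {m | ∃ S : Set α, S.ncard = m ∧ (G.IsVertexCut S ∨ Nat.card α ≤ m + 1)}.Nonempty :=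
  ⟨(Set.univ : Set α).ncard, Set.univ, rfl, Or.inr (by rw [Set.ncard_univ]; omega)⟩

lemma gked_ncard_compl_singleton [Fintype α] (u : α) :
    ({u}ᶜ : Set α).ncard = Nat.card α - 1 := by
  classical
  rw [Set.ncard_eq_toFinset_card']
  simp [Set.toFinset_compl, Finset.card_compl, Nat.card_eq_fintype_card]

lemma gked_vConn_mem (G : SimpleGraph α) :
    ∃ S : Set α, S.ncard = G.vConn ∧ (G.IsVertexCut S ∨ Nat.card α ≤ G.vConn + 1) :=
  Nat.sInf_mem (gked_vConn_set_nonempty G)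

lemma gked_vConn_le_sub_one [Fintype α] [Nonempty α] (G : SimpleGraph α) :
    G.vConn ≤ Nat.card α - 1 := by
  obtain ⟨u⟩ := (inferInstance : Nonempty α)
  exact Nat.sInf_le ⟨({u}ᶜ : Set α), gked_ncard_compl_singleton u, Or.inr (by omega)⟩

lemma gked_minDeg_le (G : SimpleGraph α) (u : α) :
    G.minDeg ≤ (G.neighborSet u).ncard :=
  Nat.sInf_le ⟨u, rfl⟩

lemma gked_exists_minDeg [Nonempty α] (G : SimpleGraph α) :
    ∃ v : α, (G.neighborSet v).ncard = G.minDeg :=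
  Nat.sInf_mem (⟨_, Classical.arbitrary α, rfl⟩ :
    {d | ∃ v, (G.neighborSet v).ncard = d}.Nonempty)

lemma gked_neighbor_ncard_eq [Fintype α] (G : SimpleGraph α) [DecidableRel G.Adj] (u : α) :
    (G.neighborSet u).ncard = (Finset.univ.filter (fun x => G.Adj u x)).card := by
  have h : (G.neighborSet u).toFinset = Finset.univ.filter (fun x => G.Adj u x) := by
    ext x
    rw [Set.mem_toFinset]; simp
  rw [Set.ncard_eq_toFinset_card', h]

lemma gked_minDeg_le_sub_one [Fintype α] (G : SimpleGraph α) (u : α) :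
    G.minDeg ≤ Nat.card α - 1 := by
  refine (gked_minDeg_le G u).trans ?_
  have h1 : G.neighborSet u ⊆ {u}ᶜ := by
    intro x hx
    simp only [Set.mem_compl_iff, Set.mem_singleton_iff]
    rintro rfl
    exact G.irrefl (v := _) hx
  calc (G.neighborSet u).ncard ≤ ({u}ᶜ : Set α).ncard :=
        Set.ncard_le_ncard h1 (Set.toFinite _)
    _ = Nat.card α - 1 := gked_ncard_compl_singleton u

lemma gked_sum_fibers {n : ℕ} [Fintype α] (S : Set (α × Fin n)) [DecidablePred (· ∈ S)] :
    ∑ u : α, (Finset.univ.filter (fun i => (u, i) ∈ S)).card = S.ncard := by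
  classical
  rw [Set.ncard_eq_toFinset_card',
    Finset.card_eq_sum_card_fiberwise (f := Prod.fst) (t := Finset.univ)
      (fun x _ => Finset.mem_univ _)]
  refine Finset.sum_congr rfl fun u _ => ?_
  refine Finset.card_bij (fun i _ => (u, i)) ?_ ?_ ?_
  · intro i hi
    simp only [Finset.mem_filter, Finset.mem_univ, true_and] at hi
    exact Finset.mem_filter.mpr ⟨Set.mem_toFinset.mpr hi, rfl⟩
  · intro i _ j _ h
    exact (Prod.mk.injEq _ _ _ _ ▸ h).2
  · rintro ⟨p1, p2⟩ hp
    simp only [Finset.mem_filter, Set.mem_toFinset] at hp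
    obtain ⟨hp1, rfl⟩ := hp
    exact ⟨p2, by simpa using hp1, rfl⟩

/-- The main (hard) lemma : a small set is not a vertex cut of `G × Kₙ`. -/
lemma gked_main [Fintype α] (G : SimpleGraph α) (hGc : G.Connected) (hGb : G.Colorable 2)
    (n : ℕ) (hn : 3 ≤ n) (S : Set (α × Fin n))
    (h1 : S.ncard < n * G.vConn) (h2 : S.ncard < (n - 1) * G.minDeg) :
    ¬ (G.tensorProd (⊤ : SimpleGraph (Fin n))).IsVertexCut S := by
  classical
  set P := G.tensorProd (⊤ : SimpleGraph (Fin n)) with hPdef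
  haveI : Nonempty α := hGc.nonempty
  intro hcut
  have hδ1 : 1 ≤ G.minDeg := by
    rcases Nat.eq_zero_or_pos G.minDeg with h0 | h
    · rw [h0, Nat.mul_zero] at h2; omega
    · exact h
  have hκ1 : 1 ≤ G.vConn := by
    rcases Nat.eq_zero_or_pos G.vConn with h0 | h
    · rw [h0, Nat.mul_zero] at h1; omega
    · exact h
  set Su : α → Finset (Fin n) := fun u => Finset.univ.filter (fun i => (u, i) ∈ S) with hSudef
  have hsum : ∑ u, (Su u).card = S.ncard := gked_sum_fibers S
  have hPadj : ∀ (u w : α) (i k : Fin n), G.Adj u w → i ≠ k → (u, i) ∉ S → (w, k) ∉ S →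
      (P.gdel S).Adj (u, i) (w, k) := fun u w i k h hik hu hw => ⟨⟨h, hik⟩, hu, hw⟩
  -- cardinality helpers
  have hsub1 : ∀ (x : α) (i : Fin n), (∀ k, k ≠ i → (x, k) ∈ S) → n - 1 ≤ (Su x).card := by
    intro x i hx
    have hss : ({i}ᶜ : Finset (Fin n)) ⊆ Su x := by
      intro k hk
      rw [Finset.mem_compl, Finset.mem_singleton] at hk
      exact Finset.mem_filter.mpr ⟨Finset.mem_univ _, hx k hk⟩
    calc n - 1 = ({i}ᶜ : Finset (Fin n)).card := by
          rw [Finset.card_compl, Finset.card_singleton, Fintype.card_fin]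
      _ ≤ (Su x).card := Finset.card_le_card hss
  have hsub2 : ∀ (x : α) (i j : Fin n), i ≠ j → (∀ k, k ≠ i → k ≠ j → (x, k) ∈ S) →
      n - 2 ≤ (Su x).card := by
    intro x i j hij hx
    have hss : ({i, j}ᶜ : Finset (Fin n)) ⊆ Su x := by
      intro k hk
      simp only [Finset.mem_compl, Finset.mem_insert, Finset.mem_singleton, not_or] at hk
      exact Finset.mem_filter.mpr ⟨Finset.mem_univ _, hx k hk.1 hk.2⟩
    calc n - 2 = ({i, j}ᶜ : Finset (Fin n)).card := by
          rw [Finset.card_compl, Finset.card_insert_of_notMem (by simpa using hij),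
            Finset.card_singleton, Fintype.card_fin]
      _ ≤ (Su x).card := Finset.card_le_card hss
  have hdead : ∀ x : α, (∀ i, (x, i) ∈ S) → (Su x).card = n := by
    intro x hx
    have : Su x = Finset.univ := by
      apply Finset.eq_univ_of_forall
      intro i
      exact Finset.mem_filter.mpr ⟨Finset.mem_univ _, hx i⟩
    rw [this, Finset.card_univ, Fintype.card_fin]
  have hsumle : ∀ (A : Finset α) (m : ℕ), (∀ x ∈ A, m ≤ (Su x).card) → A.card * m ≤ S.ncard := by
    intro A m hA
    calc A.card * m = A.card • m := by rw [smul_eq_mul]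
      _ ≤ ∑ x ∈ A, (Su x).card := Finset.card_nsmul_le_sum A _ m hA
      _ ≤ ∑ x : α, (Su x).card := Finset.sum_le_sum_of_subset (Finset.subset_univ A)
      _ = S.ncard := hsum
  have hdeg : ∀ u : α, G.minDeg ≤ (Finset.univ.filter (fun x => G.Adj u x)).card := by
    intro u
    rw [← gked_neighbor_ncard_eq]
    exact gked_minDeg_le G u
  -- witnesses of disconnection
  rcases (gked_isVertexCut_iff P S).mp hcut with hc | ⟨a, ha, b, hb, hab⟩
  · -- S = univ
    have hU : S = Set.univ := by rw [← Set.compl_empty, ← hc, compl_compl]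
    obtain ⟨M, hM⟩ : ∃ M, Nat.card α = M + 1 :=
      ⟨Nat.card α - 1, by have := Nat.card_pos (α := α); omega⟩
    have hcard : S.ncard = (M + 1) * n := by
      rw [hU, Set.ncard_univ, Nat.card_prod, Nat.card_eq_fintype_card (α := Fin n),
        Fintype.card_fin, hM]
    have hκM : G.vConn ≤ M := by have := gked_vConn_le_sub_one G; omega
    have hmul : n * G.vConn ≤ n * M := Nat.mul_le_mul_left n hκM
    have h3 : (M + 1) * n = n * M + n := by ring
    omega
  obtain ⟨a1, a2⟩ := a
  obtain ⟨b1, b2⟩ := b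
  -- Step 1 : no split vertices
  have NoSplit : ∀ (u : α) (i j : Fin n), (u, i) ∉ S → (u, j) ∉ S →
      (P.gdel S).Reachable (u, i) (u, j) := by
    intro u i j hi hj
    by_contra hR
    have hij : i ≠ j := by rintro rfl; exact hR (Reachable.refl _)
    have key : ∀ (u' : α) (i' j' : Fin n), (u', i') ∉ S → (u', j') ∉ S →
        ¬ (P.gdel S).Reachable (u', i') (u', j') →
        ∀ w k, G.Adj u' w → k ≠ i' → k ≠ j' → (w, k) ∈ S := by
      intro u' i' j' hi' hj' hR' w k hadj hki hkj
      by_contra hwk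
      exact hR' (((hPadj u' w i' k hadj (Ne.symm hki) hi' hwk).reachable).trans
        (hPadj w u' k j' hadj.symm hkj hwk hj').reachable)
    obtain ⟨C⟩ := hGb
    by_cases hA : ∃ w, G.Adj u w ∧ (w, i) ∉ S ∧ (w, j) ∉ S
    · obtain ⟨w, hadj, hwi, hwj⟩ := hA
      have hRw : ¬ (P.gdel S).Reachable (w, j) (w, i) := by
        intro hr
        exact hR (((hPadj u w i j hadj hij hi hwj).reachable).trans
          (hr.trans (hPadj w u i j hadj.symm hij hwi hj).reachable))
      set Nu := Finset.univ.filter (fun x => G.Adj u x) with hNud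
      set Nw := Finset.univ.filter (fun x => G.Adj w x) with hNwd
      have hNu : ∀ x ∈ Nu, n - 2 ≤ (Su x).card := by
        intro x hx
        rw [hNud, Finset.mem_filter] at hx
        exact hsub2 x i j hij (fun k hki hkj => key u i j hi hj hR x k hx.2 hki hkj)
      have hNw : ∀ x ∈ Nw, n - 2 ≤ (Su x).card := by
        intro x hx
        rw [hNwd, Finset.mem_filter] at hx
        exact hsub2 x j i (Ne.symm hij)
          (fun k hkj hki => key w j i hwj hwi hRw x k hx.2 hkj hki)
      have hdisj : Disjoint Nu Nw := by
        rw [Finset.disjoint_left]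
        intro x hxu hxw
        rw [hNud, Finset.mem_filter] at hxu
        rw [hNwd, Finset.mem_filter] at hxw
        have e1 : C u ≠ C x := C.valid hxu.2
        have e2 : C w ≠ C x := C.valid hxw.2
        have e3 : C u ≠ C w := C.valid hadj
        have l1 : (C u).val < 2 := (C u).isLt
        have l2 : (C w).val < 2 := (C w).isLt
        have l3 : (C x).val < 2 := (C x).isLt
        have v1 : (C u).val ≠ (C x).val := fun h => e1 (Fin.ext h)
        have v2 : (C w).val ≠ (C x).val := fun h => e2 (Fin.ext h)
        have v3 : (C u).val ≠ (C w).val := fun h => e3 (Fin.ext h)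
        omega
      have hbound : ∀ x ∈ Nu ∪ Nw, n - 2 ≤ (Su x).card := by
        intro x hx
        rcases Finset.mem_union.mp hx with h | h
        · exact hNu x h
        · exact hNw x h
      have hcard2 : (Nu ∪ Nw).card * (n - 2) ≤ S.ncard := hsumle _ _ hbound
      rw [Finset.card_union_of_disjoint hdisj] at hcard2
      have hd1 : G.minDeg ≤ Nu.card := hdeg u
      have hd2 : G.minDeg ≤ Nw.card := hdeg w
      have hstep : (2 * G.minDeg) * (n - 2) ≤ (Nu.card + Nw.card) * (n - 2) :=
        Nat.mul_le_mul_right _ (by omega)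
      have hchain : G.minDeg * (2 * (n - 2)) < G.minDeg * (n - 1) := by
        calc G.minDeg * (2 * (n - 2)) = (2 * G.minDeg) * (n - 2) := by ring
          _ ≤ (Nu.card + Nw.card) * (n - 2) := hstep
          _ ≤ S.ncard := hcard2
          _ < (n - 1) * G.minDeg := h2
          _ = G.minDeg * (n - 1) := by ring
      have := Nat.lt_of_mul_lt_mul_left hchain
      omega
    · push_neg at hA
      set Nu := Finset.univ.filter (fun x => G.Adj u x) with hNud
      have hbound : ∀ x ∈ Nu, n - 1 ≤ (Su x).card := by
        intro x hx
        rw [hNud, Finset.mem_filter] at hx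
        by_cases hxi : (x, i) ∈ S
        · refine hsub1 x j (fun k hkj => ?_)
          by_cases hki : k = i
          · exact hki ▸ hxi
          · exact key u i j hi hj hR x k hx.2 hki hkj
        · have hxj : (x, j) ∈ S := hA x hx.2 hxi
          refine hsub1 x i (fun k hki => ?_)
          by_cases hkj : k = j
          · exact hkj ▸ hxj
          · exact key u i j hi hj hR x k hx.2 hki hkj
      have hcard1 : Nu.card * (n - 1) ≤ S.ncard := hsumle _ _ hbound
      have : S.ncard < S.ncard :=
        lt_of_lt_of_le h2 (le_trans (Nat.mul_le_mul_left (n - 1) (hdeg u))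
          (by rw [Nat.mul_comm]; exact hcard1))
      exact absurd this (lt_irrefl _)
  -- Step 2 : the two sides
  have haS : (a1, a2) ∉ S := ha
  have hbS : (b1, b2) ∉ S := hb
  set V1 : α → Prop := fun u => ∃ i, (u, i) ∉ S ∧ (P.gdel S).Reachable (u, i) (a1, a2)
    with hV1def
  have haV1 : V1 a1 := ⟨a2, haS, Reachable.refl _⟩
  have hbV1 : ¬ V1 b1 := by
    rintro ⟨i, hiS, hiR⟩
    exact hab (hiR.symm.trans (NoSplit b1 i b2 hiS hbS))
  have cross : ∀ u v : α, V1 u → (∃ j, (v, j) ∉ S) → ¬ V1 v → G.Adj u v →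
      ∃ i : Fin n, (u, i) ∉ S ∧ (v, i) ∉ S ∧
        (∀ k, k ≠ i → (u, k) ∈ S) ∧ (∀ k, k ≠ i → (v, k) ∈ S) := by
    rintro u v ⟨i, hui, huR⟩ ⟨j, hvj⟩ hnv hadj
    have hvS : ∀ k, k ≠ i → (v, k) ∈ S := by
      intro k hk
      by_contra hvk
      exact hnv ⟨k, hvk, ((hPadj v u k i hadj.symm hk hvk hui).reachable).trans huR⟩
    have hji : j = i := by
      by_contra hji
      exact hvj (hvS j hji)
    subst hji
    have huS : ∀ k, k ≠ j → (u, k) ∈ S := by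
      intro k hk
      by_contra huk
      exact hnv ⟨j, hvj, ((hPadj v u j k hadj.symm (Ne.symm hk) hvj huk).reachable).trans
        ((NoSplit u k j huk hui).trans huR)⟩
    exact ⟨j, hui, hvj, huS, hvS⟩
  set Df := Finset.univ.filter (fun u : α => ∀ i, (u, i) ∈ S) with hDfdef
  set T1f := Finset.univ.filter
    (fun u : α => V1 u ∧ ∃ v, (∃ i, (v, i) ∉ S) ∧ ¬ V1 v ∧ G.Adj u v) with hT1def
  set T2f := Finset.univ.filter
    (fun u : α => ((∃ i, (u, i) ∉ S) ∧ ¬ V1 u) ∧ ∃ v, V1 v ∧ G.Adj u v) with hT2def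
  -- bounds on the special sets
  have hT1big : ∀ x ∈ T1f, n - 1 ≤ (Su x).card := by
    intro x hx
    rw [hT1def, Finset.mem_filter] at hx
    obtain ⟨_, hxV1, v, hval, hnv, hadj⟩ := hx
    obtain ⟨i, _, _, huS, _⟩ := cross x v hxV1 hval hnv hadj
    exact hsub1 x i huS
  have hT2big : ∀ x ∈ T2f, n - 1 ≤ (Su x).card := by
    intro x hx
    rw [hT2def, Finset.mem_filter] at hx
    obtain ⟨_, ⟨hal, hnx⟩, v, hvV1, hadj⟩ := hx
    obtain ⟨i, _, _, _, hvS⟩ := cross v x hvV1 hal hnx hadj.symm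
    exact hsub1 x i hvS
  -- case analysis
  by_cases hcase1 : ∀ u : α, V1 u →
      ∃ v, (∃ i, (v, i) ∉ S) ∧ ¬ V1 v ∧ G.Adj u v
  · -- every V1 vertex has a cross edge, look at neighbors of a1
    set Nu := Finset.univ.filter (fun x => G.Adj a1 x) with hNud
    have hbound : ∀ x ∈ Nu, n - 1 ≤ (Su x).card := by
      intro x hx
      rw [hNud, Finset.mem_filter] at hx
      by_cases hxV1 : V1 x
      · obtain ⟨v, hval, hnv, hadj⟩ := hcase1 x hxV1
        obtain ⟨i, _, _, huS, _⟩ := cross x v hxV1 hval hnv hadj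
        exact hsub1 x i huS
      · by_cases hal : ∃ i, (x, i) ∉ S
        · obtain ⟨i, _, _, _, hvS⟩ := cross a1 x haV1 hal hxV1 hx.2
          exact hsub1 x i hvS
        · push_neg at hal
          rw [hdead x hal]
          omega
    have hcard1 : Nu.card * (n - 1) ≤ S.ncard := hsumle _ _ hbound
    have : S.ncard < S.ncard :=
      lt_of_lt_of_le h2 (le_trans (Nat.mul_le_mul_left (n - 1) (hdeg a1))
        (by rw [Nat.mul_comm]; exact hcard1))
    exact absurd this (lt_irrefl _)
  by_cases hcase2 : ∀ u : α, ((∃ i, (u, i) ∉ S) ∧ ¬ V1 u) → ∃ v, V1 v ∧ G.Adj u v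
  · -- every V2 vertex has a cross edge, look at neighbors of b1
    set Nu := Finset.univ.filter (fun x => G.Adj b1 x) with hNud
    have hbound : ∀ x ∈ Nu, n - 1 ≤ (Su x).card := by
      intro x hx
      rw [hNud, Finset.mem_filter] at hx
      by_cases hxV1 : V1 x
      · obtain ⟨i, _, _, huS, _⟩ := cross x b1 hxV1 ⟨b2, hbS⟩ hbV1 hx.2.symm
        exact hsub1 x i huS
      · by_cases hal : ∃ i, (x, i) ∉ S
        · obtain ⟨v, hvV1, hadj⟩ := hcase2 x ⟨hal, hxV1⟩
          obtain ⟨i, _, _, _, hvS⟩ := cross v x hvV1 hal hxV1 hadj.symm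
          exact hsub1 x i hvS
        · push_neg at hal
          rw [hdead x hal]
          omega
    have hcard1 : Nu.card * (n - 1) ≤ S.ncard := hsumle _ _ hbound
    have : S.ncard < S.ncard :=
      lt_of_lt_of_le h2 (le_trans (Nat.mul_le_mul_left (n - 1) (hdeg b1))
        (by rw [Nat.mul_comm]; exact hcard1))
    exact absurd this (lt_irrefl _)
  -- case (iii): both sides have a vertex with no cross edge
  obtain ⟨u1, hu1⟩ := not_forall.mp hcase1
  obtain ⟨hu1V1, hu1nc⟩ := Classical.not_imp.mp hu1
  obtain ⟨u2, hu2⟩ := not_forall.mp hcase2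
  obtain ⟨hu2V2, hu2nc⟩ := Classical.not_imp.mp hu2
  obtain ⟨iu1, hiu1, _⟩ := hu1V1
  have hu1V1' : V1 u1 := ⟨iu1, hiu1, by assumption⟩
  -- u1 not in T1f, u2 not in T2f
  have hu1T1 : u1 ∉ T1f := by
    intro hc
    exact hu1nc (Finset.mem_filter.mp hc).2.2
  have hu2T2 : u2 ∉ T2f := by
    intro hc
    exact hu2nc (Finset.mem_filter.mp hc).2.2
  -- first cut : Df ∪ T1f separates u1 from u2
  have cut1 : G.IsVertexCut (↑(Df ∪ T1f) : Set α) := by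
    rw [gked_isVertexCut_iff]
    right
    have hu1m : u1 ∈ (↑(Df ∪ T1f) : Set α)ᶜ := by
      intro hc
      rcases Finset.mem_union.mp (Finset.mem_coe.mp hc) with hc | hc
      · exact hiu1 ((Finset.mem_filter.mp hc).2 iu1)
      · exact hu1T1 hc
    have hu2m : u2 ∈ (↑(Df ∪ T1f) : Set α)ᶜ := by
      intro hc
      rcases Finset.mem_union.mp (Finset.mem_coe.mp hc) with hc | hc
      · obtain ⟨i, hi⟩ := hu2V2.1
        exact hi ((Finset.mem_filter.mp hc).2 i)
      · exact hu2V2.2 (Finset.mem_filter.mp hc).2.1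
    refine ⟨u1, hu1m, u2, hu2m, fun hr => ?_⟩
    have hfinal : V1 u2 ∧ u2 ∉ T1f := by
      refine gked_reach_invariant (Q := fun x => V1 x ∧ x ∉ T1f) ?_ hr ⟨hu1V1', hu1T1⟩
      rintro x y ⟨hxV1, hxT1⟩ ⟨hadj, _, hy⟩
      have hyD : y ∉ Df := fun hc => hy (Finset.mem_coe.mpr (Finset.mem_union_left _ hc))
      have hyT : y ∉ T1f := fun hc => hy (Finset.mem_coe.mpr (Finset.mem_union_right _ hc))
      have hyal : ∃ i, (y, i) ∉ S := by
        by_contra hd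
        push_neg at hd
        exact hyD (Finset.mem_filter.mpr ⟨Finset.mem_univ _, hd⟩)
      have hyV1 : V1 y := by
        by_contra hny
        exact hxT1 (Finset.mem_filter.mpr ⟨Finset.mem_univ _, hxV1, y, hyal, hny, hadj⟩)
      exact ⟨hyV1, hyT⟩
    exact hu2V2.2 hfinal.1
  -- second cut : Df ∪ T2f separates u2 from u1
  have cut2 : G.IsVertexCut (↑(Df ∪ T2f) : Set α) := by
    rw [gked_isVertexCut_iff]
    right
    have hu2m : u2 ∈ (↑(Df ∪ T2f) : Set α)ᶜ := by
      intro hc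
      rcases Finset.mem_union.mp (Finset.mem_coe.mp hc) with hc | hc
      · obtain ⟨i, hi⟩ := hu2V2.1
        exact hi ((Finset.mem_filter.mp hc).2 i)
      · exact hu2T2 hc
    have hu1m : u1 ∈ (↑(Df ∪ T2f) : Set α)ᶜ := by
      intro hc
      rcases Finset.mem_union.mp (Finset.mem_coe.mp hc) with hc | hc
      · exact hiu1 ((Finset.mem_filter.mp hc).2 iu1)
      · exact (Finset.mem_filter.mp hc).2.1.2 hu1V1'
    refine ⟨u2, hu2m, u1, hu1m, fun hr => ?_⟩
    have hfinal : ((∃ i, (u1, i) ∉ S) ∧ ¬ V1 u1) ∧ u1 ∉ T2f := by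
      refine gked_reach_invariant
        (Q := fun x => ((∃ i, (x, i) ∉ S) ∧ ¬ V1 x) ∧ x ∉ T2f) ?_ hr ⟨hu2V2, hu2T2⟩
      rintro x y ⟨hxQ, hxT2⟩ ⟨hadj, _, hy⟩
      have hyD : y ∉ Df := fun hc => hy (Finset.mem_coe.mpr (Finset.mem_union_left _ hc))
      have hyT : y ∉ T2f := fun hc => hy (Finset.mem_coe.mpr (Finset.mem_union_right _ hc))
      have hyal : ∃ i, (y, i) ∉ S := by
        by_contra hd
        push_neg at hd
        exact hyD (Finset.mem_filter.mpr ⟨Finset.mem_univ _, hd⟩)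
      have hyV1 : ¬ V1 y := by
        intro hvy
        exact hxT2 (Finset.mem_filter.mpr ⟨Finset.mem_univ _, hxQ, y, hvy, hadj⟩)
      exact ⟨⟨hyal, hyV1⟩, hyT⟩
    exact hfinal.1.2 hu1V1'
  -- cardinality consequences of the cuts
  have hk1 : G.vConn ≤ Df.card + T1f.card := by
    have := gked_vConn_le_of_cut G _ cut1
    rw [Set.ncard_coe_finset] at this
    exact this.trans (Finset.card_union_le _ _)
  have hk2 : G.vConn ≤ Df.card + T2f.card := by
    have := gked_vConn_le_of_cut G _ cut2
    rw [Set.ncard_coe_finset] at this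
    exact this.trans (Finset.card_union_le _ _)
  -- disjointness and counting
  have hd1 : Disjoint Df T1f := by
    rw [Finset.disjoint_left]
    intro x hx hx'
    obtain ⟨i, hi, _⟩ := (Finset.mem_filter.mp hx').2.1
    exact hi ((Finset.mem_filter.mp hx).2 i)
  have hd2 : Disjoint Df T2f := by
    rw [Finset.disjoint_left]
    intro x hx hx'
    obtain ⟨i, hi⟩ := (Finset.mem_filter.mp hx').2.1.1
    exact hi ((Finset.mem_filter.mp hx).2 i)
  have hd3 : Disjoint T1f T2f := by
    rw [Finset.disjoint_left]
    intro x hx hx'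
    exact (Finset.mem_filter.mp hx').2.1.2 (Finset.mem_filter.mp hx).2.1
  have hdisjU : Disjoint (Df ∪ T1f) T2f := Finset.disjoint_union_left.mpr ⟨hd2, hd3⟩
  have hsumDf : ∑ x ∈ Df, (Su x).card = Df.card * n :=
    Finset.sum_const_nat (fun x hx => hdead x ((Finset.mem_filter.mp hx).2))
  have hsumT1 : T1f.card * (n - 1) ≤ ∑ x ∈ T1f, (Su x).card := by
    calc T1f.card * (n - 1) = T1f.card • (n - 1) := by rw [smul_eq_mul]
      _ ≤ ∑ x ∈ T1f, (Su x).card := Finset.card_nsmul_le_sum _ _ _ hT1big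
  have hsumT2 : T2f.card * (n - 1) ≤ ∑ x ∈ T2f, (Su x).card := by
    calc T2f.card * (n - 1) = T2f.card • (n - 1) := by rw [smul_eq_mul]
      _ ≤ ∑ x ∈ T2f, (Su x).card := Finset.card_nsmul_le_sum _ _ _ hT2big
  have hbig : Df.card * n + T1f.card * (n - 1) + T2f.card * (n - 1) ≤ S.ncard := by
    calc Df.card * n + T1f.card * (n - 1) + T2f.card * (n - 1)
        ≤ (∑ x ∈ Df, (Su x).card) + (∑ x ∈ T1f, (Su x).card) + (∑ x ∈ T2f, (Su x).card) :=
          Nat.add_le_add (Nat.add_le_add (le_of_eq hsumDf.symm) hsumT1) hsumT2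
      _ = ∑ x ∈ (Df ∪ T1f) ∪ T2f, (Su x).card := by
          rw [Finset.sum_union hdisjU, Finset.sum_union hd1]
      _ ≤ ∑ x : α, (Su x).card := Finset.sum_le_sum_of_subset (Finset.subset_univ _)
      _ = S.ncard := hsum
  -- final arithmetic
  have hdlt : Df.card < G.vConn := by
    have hdn : Df.card * n ≤ S.ncard :=
      le_trans (le_trans (Nat.le_add_right _ _) (Nat.le_add_right _ _)) hbig
    have : Df.card * n < G.vConn * n := by
      calc Df.card * n ≤ S.ncard := hdn
        _ < n * G.vConn := h1
        _ = G.vConn * n := Nat.mul_comm _ _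
    exact Nat.lt_of_mul_lt_mul_right this
  have hk : G.vConn = Df.card + (G.vConn - Df.card) := by omega
  set e := G.vConn - Df.card with hedef
  have he1 : 1 ≤ e := by omega
  have ht1 : e ≤ T1f.card := by omega
  have ht2 : e ≤ T2f.card := by omega
  have hx1 : e * (n - 1) ≤ T1f.card * (n - 1) := Nat.mul_le_mul_right _ ht1
  have hx2 : e * (n - 1) ≤ T2f.card * (n - 1) := Nat.mul_le_mul_right _ ht2
  have hkey : Df.card * n + e * (n - 1) + e * (n - 1) ≤ S.ncard :=
    le_trans (Nat.add_le_add (Nat.add_le_add_left hx1 _) hx2) hbig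
  have hfin : Df.card * n + e * (n - 1) + e * (n - 1) < n * (Df.card + e) := by
    calc Df.card * n + e * (n - 1) + e * (n - 1) ≤ S.ncard := hkey
      _ < n * G.vConn := h1
      _ = n * (Df.card + e) := by rw [← hk]
  have hfin2 : Df.card * n + e * (2 * (n - 1)) < Df.card * n + e * n := by
    calc Df.card * n + e * (2 * (n - 1)) = Df.card * n + e * (n - 1) + e * (n - 1) := by ring
      _ < n * (Df.card + e) := hfin
      _ = Df.card * n + e * n := by ring
  have hfin3 : e * (2 * (n - 1)) < e * n := Nat.lt_of_add_lt_add_left hfin2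
  have hfin4 : 2 * (n - 1) < n := Nat.lt_of_mul_lt_mul_left hfin3
  omega

end gked

/-- For a connected bipartite graph G and n ≥ 3,
κ(G × K_n) = min{n·κ(G), (n-1)·δ(G)}. -/
theorem stmt_2 (G : SimpleGraph α) (hGc : G.Connected) (hGb : G.Colorable 2)
    (n : ℕ) (hn : 3 ≤ n) :
    (G.tensorProd (⊤ : SimpleGraph (Fin n))).vConn =
      min (n * G.vConn) ((n - 1) * G.minDeg) := by
  classical
  set P := G.tensorProd (⊤ : SimpleGraph (Fin n)) with hPdef
  haveI : Nonempty α := hGc.nonempty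
  haveI : NeZero n := ⟨by omega⟩
  cases finite_or_infinite α with
  | inr hinf =>
    have h1 : P.vConn = 0 :=
      Nat.sInf_eq_zero.mpr (Or.inl ⟨∅, by simp, Or.inr (by simp [Nat.card_eq_zero_of_infinite])⟩)
    have h2 : G.vConn = 0 :=
      Nat.sInf_eq_zero.mpr (Or.inl ⟨∅, by simp, Or.inr (by simp [Nat.card_eq_zero_of_infinite])⟩)
    simp [h1, h2]
  | inl hfin =>
    haveI : Fintype α := Fintype.ofFinite α
    obtain ⟨M, hM⟩ : ∃ M, Nat.card α = M + 1 :=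
      ⟨Nat.card α - 1, by have := (Nat.card_pos (α := α)); omega⟩
    have hκN : G.vConn ≤ M := by have := gked_vConn_le_sub_one G; omega
    have hδN : G.minDeg ≤ M := by
      have := gked_minDeg_le_sub_one G (Classical.arbitrary α); omega
    have hNcard : Nat.card (α × Fin n) = (M + 1) * n := by
      rw [Nat.card_prod, Nat.card_eq_fintype_card (α := Fin n), Fintype.card_fin, hM]
    set i0 : Fin n := ⟨0, by omega⟩
    set i1 : Fin n := ⟨1, by omega⟩
    have h01 : i0 ≠ i1 := by simp [i0, i1, Fin.ext_iff]
    -- upper bound 1 : P.vConn ≤ n * κ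
    have upper1 : P.vConn ≤ n * G.vConn := by
      obtain ⟨S, hScard, hS⟩ := gked_vConn_mem G
      rcases hS with hScut | hSbig
      · -- genuine cut
        rcases (gked_isVertexCut_iff G S).mp hScut with hc | ⟨x, hx, y, hy, hxy⟩
        · -- Sᶜ = ∅ : S = univ, so κ = card, contradiction with κ ≤ M
          exfalso
          have hU : S = Set.univ := by
            rw [← Set.compl_empty, ← hc, compl_compl]
          rw [hU, Set.ncard_univ] at hScard
          omega
        · refine Nat.sInf_le ⟨S ×ˢ (Set.univ : Set (Fin n)), ?_, Or.inl ?_⟩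
          · rw [gked_ncard_sprod, Set.ncard_univ, Nat.card_eq_fintype_card, Fintype.card_fin,
              hScard, Nat.mul_comm]
          · rw [gked_isVertexCut_iff]
            right
            have hxm : (x, i0) ∈ (S ×ˢ (Set.univ : Set (Fin n)))ᶜ := by simpa using hx
            have hym : (y, i0) ∈ (S ×ˢ (Set.univ : Set (Fin n)))ᶜ := by simpa using hy
            refine ⟨(x, i0), hxm, (y, i0), hym, fun hr => hxy ?_⟩
            let f : P.gdel (S ×ˢ (Set.univ : Set (Fin n))) →g G.gdel S :=
              ⟨Prod.fst, fun {p q} hpq => ⟨hpq.1.1,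
                fun hc => hpq.2.1 (Set.mem_prod.mpr ⟨hc, Set.mem_univ _⟩),
                fun hc => hpq.2.2 (Set.mem_prod.mpr ⟨hc, Set.mem_univ _⟩)⟩⟩
            exact hr.map f
      · -- κ = card - 1 case
        have hκeq : G.vConn = M := by omega
        obtain ⟨u⟩ := (inferInstance : Nonempty α)
        refine Nat.sInf_le ⟨({u}ᶜ : Set α) ×ˢ (Set.univ : Set (Fin n)), ?_, Or.inl ?_⟩
        · rw [gked_ncard_sprod, Set.ncard_univ, Nat.card_eq_fintype_card, Fintype.card_fin,
            gked_ncard_compl_singleton, hκeq, hM, Nat.mul_comm]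
          norm_num
        · rw [gked_isVertexCut_iff]
          right
          have hmem : ∀ i : Fin n, (u, i) ∈ (({u}ᶜ : Set α) ×ˢ (Set.univ : Set (Fin n)))ᶜ := by
            intro i
            simp
          refine ⟨(u, i0), hmem i0, (u, i1), hmem i1, fun hr => ?_⟩
          have heq : (u, i1) = (u, i0) := by
            refine gked_reach_invariant (Q := fun z => z = (u, i0)) ?_ hr rfl
            rintro x y rfl hxy
            exfalso
            have hy1 : y.1 = u := by
              by_contra hne
              exact hxy.2.2 (Set.mem_prod.mpr ⟨hne, Set.mem_univ _⟩)
            exact G.irrefl (v := u) (hy1 ▸ hxy.1.1)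
          exact h01.symm (congrArg Prod.snd heq)
    -- upper bound 2 : P.vConn ≤ (n-1) * δ
    have upper2 : P.vConn ≤ (n - 1) * G.minDeg := by
      obtain ⟨v, hv⟩ := gked_exists_minDeg G
      refine Nat.sInf_le ⟨(G.neighborSet v) ×ˢ ({i0}ᶜ : Set (Fin n)), ?_, Or.inl ?_⟩
      · rw [gked_ncard_sprod, gked_ncard_compl_singleton, hv,
          Nat.card_eq_fintype_card (α := Fin n), Fintype.card_fin, Nat.mul_comm]
      · rw [gked_isVertexCut_iff]
        right
        have hv0 : (v, i0) ∈ ((G.neighborSet v) ×ˢ ({i0}ᶜ : Set (Fin n)))ᶜ := by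
          intro hmem
          exact G.irrefl (v := v) (Set.mem_prod.mp hmem).1
        have hnoadj : ∀ y, ¬ (P.gdel ((G.neighborSet v) ×ˢ ({i0}ᶜ : Set (Fin n)))).Adj (v, i0) y := by
          rintro y ⟨hadj, _, hyT⟩
          apply hyT
          refine Set.mem_prod.mpr ⟨hadj.1, ?_⟩
          simp only [Set.mem_compl_iff, Set.mem_singleton_iff]
          exact fun h0 => hadj.2 (by rw [← h0])
        by_cases hδ0 : ∃ u, u ∈ G.neighborSet v
        · obtain ⟨u, hu⟩ := hδ0
          have hu0 : (u, i0) ∈ ((G.neighborSet v) ×ˢ ({i0}ᶜ : Set (Fin n)))ᶜ := by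
            intro hmem
            exact (Set.mem_prod.mp hmem).2 rfl
          refine ⟨(v, i0), hv0, (u, i0), hu0, fun hr => ?_⟩
          have heq : (u, i0) = (v, i0) := by
            refine gked_reach_invariant (Q := fun z => z = (v, i0)) ?_ hr rfl
            rintro x y rfl hxy
            exact absurd hxy (hnoadj y)
          have hue := congrArg Prod.fst heq
          simp only at hue
          exact G.irrefl (v := v) (hue ▸ hu)
        · -- v has no neighbors : G is a single vertex, P is edgeless
          push_neg at hδ0
          have hsingle : ∀ x : α, x = v := by
            intro x
            refine gked_reach_invariant (Q := fun z => z = v) ?_ (hGc.preconnected v x) rfl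
            rintro z y rfl hzy
            exact absurd hzy (hδ0 y)
          refine ⟨(v, i0), hv0, (v, i1), ?_, fun hr => ?_⟩
          · intro hmem
            exact G.irrefl (v := v) (Set.mem_prod.mp hmem).1
          · have heq : (v, i1) = (v, i0) := by
              refine gked_reach_invariant (Q := fun z => z = (v, i0)) ?_ hr rfl
              rintro x y rfl hxy
              exfalso
              have h1 : y.1 = v := hsingle _
              exact G.irrefl (v := v) (h1 ▸ hxy.1.1)
            exact h01.symm (congrArg Prod.snd heq)
    -- lower bound
    have lower : min (n * G.vConn) ((n - 1) * G.minDeg) ≤ P.vConn := by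
      refine le_csInf ⟨_, Set.univ, rfl, Or.inr (by rw [Set.ncard_univ]; omega)⟩ ?_
      rintro m ⟨S, rfl, hcut | hbig⟩
      · by_contra hlt
        push_neg at hlt
        rw [lt_min_iff] at hlt
        exact gked_main G hGc hGb n hn S hlt.1 hlt.2 hcut
      · -- S.ncard ≥ card - 1 ≥ n*κ
        refine min_le_of_left_le ?_
        rw [hNcard] at hbig
        have hq : n * G.vConn ≤ n * M := Nat.mul_le_mul_left n hκN
        have hq2 : (M + 1) * n = n * M + n := by ring
        omega
    exact le_antisymm (le_min upper1 upper2) lower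
end

section
/- Let G be a connected bipartite graph with bipartition (X,Y), and n ≥ 3 an odd integer. If |X| ≥ δ(G)+1, |Y| ≥ δ(G)+1, and κ(G) > (2/n)·δ(G), then G × C_n is super connected. -/
open SimpleGraph

universe u v

variable {α : Type u} {β : Type v}

open scoped Fin.NatCast Fin.CommRing

section SC11aux

variable {m : ℕ}

theorem SC11.vConn_le {G : SimpleGraph α} {S : Set α} (h : ¬ (G.induce Sᶜ).Connected) :
    G.vConn ≤ S.ncard :=
  Nat.sInf_le ⟨S, rfl, Or.inl h⟩

theorem SC11.induce_connected {G : SimpleGraph α} {S : Set α} (h : S.ncard < G.vConn) :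
    (G.induce Sᶜ).Connected := by
  by_contra hc
  exact absurd (SC11.vConn_le hc) (not_le.2 h)

theorem SC11.minDeg_le (G : SimpleGraph α) (v : α) : G.minDeg ≤ (G.neighborSet v).ncard :=
  Nat.sInf_le ⟨v, rfl⟩

theorem SC11.exists_minDeg (G : SimpleGraph α) [Nonempty α] :
    ∃ v, (G.neighborSet v).ncard = G.minDeg :=
  Nat.sInf_mem (s := {d | ∃ v, (G.neighborSet v).ncard = d})
    ⟨(G.neighborSet (Classical.arbitrary α)).ncard, Classical.arbitrary α, rfl⟩

open Classical in
/-- parity value of a vertex of a bipartite graph -/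
noncomputable def SC11.pv (X : Set α) (u : α) : ZMod 2 := if u ∈ X then 0 else 1

/-- joint index of a vertex of the product graph -/
noncomputable def SC11.jf (X : Set α) (m : ℕ) (p : α × Fin (m + 3)) :
    ZMod 2 × Fin (m + 3) :=
  (SC11.pv X p.1, p.2)

/-- successor on the copy-cycle index -/
def SC11.sg (m : ℕ) (k : ZMod 2 × Fin (m + 3)) : ZMod 2 × Fin (m + 3) :=
  (k.1 + 1, k.2 + 1)

/-- predecessor on the copy-cycle index -/
def SC11.tg (m : ℕ) (k : ZMod 2 × Fin (m + 3)) : ZMod 2 × Fin (m + 3) :=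
  (k.1 + 1, k.2 - 1)

/-- the joint with index `k` -/
noncomputable def SC11.J (X : Set α) (m : ℕ) (k : ZMod 2 × Fin (m + 3)) :
    Set (α × Fin (m + 3)) :=
  {p | SC11.jf X m p = k}

/-- the copy with index `k` -/
noncomputable def SC11.Cop (X : Set α) (m : ℕ) (k : ZMod 2 × Fin (m + 3)) :
    Set (α × Fin (m + 3)) :=
  SC11.J X m (SC11.tg m k) ∪ SC11.J X m k

namespace SC11

theorem sg_tg (k : ZMod 2 × Fin (m + 3)) : sg m (tg m k) = k := by
  unfold sg tg
  have h : k.1 + 1 + 1 = k.1 := by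
    have : ∀ e : ZMod 2, e + 1 + 1 = e := by decide
    exact this k.1
  simp [h, sub_add_cancel]

theorem tg_sg (k : ZMod 2 × Fin (m + 3)) : tg m (sg m k) = k := by
  unfold sg tg
  have h : k.1 + 1 + 1 = k.1 := by
    have : ∀ e : ZMod 2, e + 1 + 1 = e := by decide
    exact this k.1
  simp [h, add_sub_cancel_right]

theorem two_ne_zero_fin : (2 : Fin (m + 3)) ≠ 0 := by
  have h : ((2 : ℕ) : Fin (m + 3)) ≠ 0 := by
    rw [Ne, Fin.natCast_eq_zero]
    intro h
    have := Nat.le_of_dvd (by norm_num) h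
    omega
  simpa using h

theorem tg_ne (k : ZMod 2 × Fin (m + 3)) : tg m k ≠ k := by
  intro h
  have h1 := congrArg Prod.fst h
  simp only [tg] at h1
  revert h1
  have : ∀ e : ZMod 2, e + 1 ≠ e := by decide
  exact this k.1

theorem sg_ne (k : ZMod 2 × Fin (m + 3)) : sg m k ≠ k := by
  intro h
  have h1 := congrArg Prod.fst h
  simp only [sg] at h1
  revert h1
  have : ∀ e : ZMod 2, e + 1 ≠ e := by decide
  exact this k.1

theorem sg_ne_tg (k : ZMod 2 × Fin (m + 3)) : sg m k ≠ tg m k := by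
  intro h
  have h2 := congrArg Prod.snd h
  simp only [sg, tg] at h2
  exact two_ne_zero_fin (m := m) (by linear_combination h2)

theorem sg_sg_ne (k : ZMod 2 × Fin (m + 3)) : sg m (sg m k) ≠ k := by
  intro h
  have h2 := congrArg Prod.snd h
  simp only [sg] at h2
  exact two_ne_zero_fin (m := m) (by linear_combination h2)

theorem sg_inj : Function.Injective (sg m) := by
  intro k k' h
  rw [← tg_sg (m := m) k, h, tg_sg]

end SC11

end SC11aux
namespace SC11

variable {m : ℕ} {G : SimpleGraph α} {X Y : Set α}

theorem z2ne : ∀ a b : ZMod 2, a ≠ b → a = b + 1 := by decide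

theorem z2cases : ∀ a : ZMod 2, a = 0 ∨ a = 1 := by decide

theorem exists_cast (hodd : Odd (m + 3)) (x : Fin (m + 3)) (e : ZMod 2) :
    ∃ t : ℕ, ((t : Fin (m + 3)) = x ∧ ((t : ZMod 2) = e)) := by
  have hm : ((m + 3 : ℕ) : ZMod 2) = 1 := by
    rw [← ZMod.natCast_mod, Nat.odd_iff.mp hodd]
    norm_num
  by_cases h : ((x.val : ℕ) : ZMod 2) = e
  · exact ⟨x.val, by simp, h⟩
  · refine ⟨x.val + (m + 3), ?_, ?_⟩
    · rw [Nat.cast_add, Fin.cast_val_eq_self, Fin.natCast_self, add_zero]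
    · rw [Nat.cast_add, hm]
      have h2 : ∀ a b : ZMod 2, a ≠ b → a + 1 = b := by decide
      exact h2 _ _ h

theorem sg_iter (t : ℕ) (k : ZMod 2 × Fin (m + 3)) :
    (sg m)^[t] k = (k.1 + (t : ZMod 2), k.2 + (t : Fin (m + 3))) := by
  induction t with
  | zero => simp
  | succ t ih =>
    rw [Function.iterate_succ_apply', ih]
    unfold sg
    rw [Prod.ext_iff]
    constructor <;> (push_cast; ring)

theorem tg_iter (t : ℕ) (k : ZMod 2 × Fin (m + 3)) :
    (tg m)^[t] k = (k.1 + (t : ZMod 2), k.2 - (t : Fin (m + 3))) := by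
  induction t with
  | zero => simp
  | succ t ih =>
    rw [Function.iterate_succ_apply', ih]
    unfold tg
    rw [Prod.ext_iff]
    constructor <;> (push_cast; ring)

theorem sg_surj (hodd : Odd (m + 3)) (k k' : ZMod 2 × Fin (m + 3)) :
    ∃ t : ℕ, (sg m)^[t] k = k' := by
  obtain ⟨t, h1, h2⟩ := exists_cast hodd (k'.2 - k.2) (k'.1 - k.1)
  refine ⟨t, ?_⟩
  rw [sg_iter, h1, h2, Prod.ext_iff]
  constructor <;> simp

theorem tg_surj (hodd : Odd (m + 3)) (k k' : ZMod 2 × Fin (m + 3)) :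
    ∃ t : ℕ, (tg m)^[t] k = k' := by
  obtain ⟨t, h1, h2⟩ := exists_cast hodd (k.2 - k'.2) (k'.1 - k.1)
  refine ⟨t, ?_⟩
  rw [tg_iter, h1, h2, Prod.ext_iff]
  constructor <;> simp

theorem mem_J {p : α × Fin (m + 3)} {k} : p ∈ J X m k ↔ pv X p.1 = k.1 ∧ p.2 = k.2 := by
  simp [J, jf, Prod.ext_iff]

theorem mem_J_self (p : α × Fin (m + 3)) : p ∈ J X m (jf X m p) := rfl

theorem J_disjoint {k k' : ZMod 2 × Fin (m + 3)} (h : k ≠ k') :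
    Disjoint (J X m k) (J X m k') := by
  rw [Set.disjoint_left]
  rintro p hp hp'
  rw [mem_J] at hp hp'
  exact h (by rw [Prod.ext_iff]; exact ⟨hp.1 ▸ hp'.1, hp.2 ▸ hp'.2⟩)

theorem J_subset_Cop (k : ZMod 2 × Fin (m + 3)) : J X m k ⊆ Cop X m k :=
  Set.subset_union_right

theorem Jtg_subset_Cop (k : ZMod 2 × Fin (m + 3)) : J X m (tg m k) ⊆ Cop X m k :=
  Set.subset_union_left

theorem J_subset_Cop_sg (k : ZMod 2 × Fin (m + 3)) : J X m k ⊆ Cop X m (sg m k) := by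
  have : J X m k = J X m (tg m (sg m k)) := by rw [tg_sg]
  rw [this]
  exact Jtg_subset_Cop _

theorem pv_eq_zero_iff {u : α} : pv X u = 0 ↔ u ∈ X := by
  unfold pv
  by_cases h : u ∈ X
  · simp [h]
  · simp only [if_neg h]
    constructor
    · intro h1; exact absurd h1 (by decide)
    · intro h1; exact absurd h1 h

theorem pv_eq_one_iff (hbip : G.IsBipartition X Y) {u : α} : pv X u = 1 ↔ u ∈ Y := by
  unfold pv
  by_cases h : u ∈ X
  · rw [if_pos h]
    constructor
    · intro h1; exact absurd h1 (by decide)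
    · intro h1; exact absurd h1 (Set.disjoint_left.mp hbip.1 h)
  · rw [if_neg h]
    constructor
    · intro _
      have hu : u ∈ X ∪ Y := by rw [hbip.2.1]; trivial
      rcases hu with hu | hu
      · exact absurd hu h
      · exact hu
    · intro _; rfl

theorem pv_opp (hbip : G.IsBipartition X Y) {u v : α} (h : G.Adj u v) :
    pv X v = pv X u + 1 := by
  rcases hbip.2.2 u v h with ⟨hu, hv⟩ | ⟨hu, hv⟩
  · have hv' : v ∉ X := fun hvX => Set.disjoint_left.mp hbip.1 hvX hv
    unfold pv
    rw [if_pos hu, if_neg hv']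
    decide
  · have hu' : u ∉ X := fun huX => Set.disjoint_left.mp hbip.1 huX hu
    unfold pv
    rw [if_neg hu', if_pos hv]
    decide

theorem copy_pos (u : α) (k : ZMod 2 × Fin (m + 3)) :
    ∃ r : α × Fin (m + 3), r ∈ Cop X m k ∧ r.1 = u := by
  by_cases h : pv X u = k.1
  · exact ⟨(u, k.2), J_subset_Cop k (mem_J.mpr ⟨h, rfl⟩), rfl⟩
  · refine ⟨(u, k.2 - 1), Jtg_subset_Cop k (mem_J.mpr ⟨?_, rfl⟩), rfl⟩
    exact z2ne _ _ h

theorem copy_uniq {p q : α × Fin (m + 3)} {k} (hp : p ∈ Cop X m k) (hq : q ∈ Cop X m k)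
    (h : p.1 = q.1) : p = q := by
  have hne : ∀ e : ZMod 2, e + 1 ≠ e := by decide
  rcases hp with hp | hp <;> rcases hq with hq | hq <;>
    rw [mem_J] at hp hq <;> rw [Prod.ext_iff] <;> refine ⟨h, ?_⟩
  · rw [hp.2, hq.2]
  · exfalso; rw [h] at hp; exact hne k.1 (hp.1.symm.trans hq.1)
  · exfalso; rw [h] at hp; exact hne k.1 (hq.1.symm.trans hp.1)
  · rw [hp.2, hq.2]

theorem copy_adj (hbip : G.IsBipartition X Y) {p q : α × Fin (m + 3)} {k}
    (hp : p ∈ Cop X m k) (hq : q ∈ Cop X m k) (hadj : G.Adj p.1 q.1) :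
    (G.tensorProd (cycleGraph (m + 3))).Adj p q := by
  have hopp := pv_opp hbip hadj
  have hne : ∀ e : ZMod 2, e + 1 ≠ e := by decide
  rcases hp with hp | hp <;> rcases hq with hq | hq <;> rw [mem_J] at hp hq
  · exfalso; rw [hp.1] at hopp; rw [hq.1] at hopp; exact hne _ hopp.symm
  · refine ⟨hadj, ?_⟩
    have : (cycleGraph (m + 3)).Adj (k.2 - 1) k.2 := by
      exact (cycleGraph_adj (n := m + 1)).mpr (Or.inr (sub_sub_cancel k.2 1))
    rw [hp.2, hq.2]
    exact this
  · refine ⟨hadj, ?_⟩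
    have : (cycleGraph (m + 3)).Adj k.2 (k.2 - 1) := by
      exact (cycleGraph_adj (n := m + 1)).mpr (Or.inl (sub_sub_cancel k.2 1))
    rw [hp.2, hq.2]
    exact this
  · exfalso; rw [hp.1, hq.1] at hopp; exact hne _ hopp.symm

theorem le_J_card (hbip : G.IsBipartition X Y) (hX : G.minDeg + 1 ≤ X.ncard)
    (hY : G.minDeg + 1 ≤ Y.ncard) (k : ZMod 2 × Fin (m + 3)) :
    G.minDeg + 1 ≤ (J X m k).ncard := by
  have hinj : Function.Injective (fun u : α => (u, k.2)) := fun a b h => congrArg Prod.fst h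
  rcases z2cases k.1 with h | h
  · have : J X m k = (fun u : α => (u, k.2)) '' X := by
      ext p
      rw [mem_J]
      constructor
      · rintro ⟨h1, h2⟩
        exact ⟨p.1, pv_eq_zero_iff.mp (h ▸ h1), by rw [← h2]⟩
      · rintro ⟨u, hu, rfl⟩
        exact ⟨by rw [h]; exact pv_eq_zero_iff.mpr hu, rfl⟩
    rw [this, Set.ncard_image_of_injective _ hinj]
    exact hX
  · have : J X m k = (fun u : α => (u, k.2)) '' Y := by
      ext p
      rw [mem_J]
      constructor
      · rintro ⟨h1, h2⟩
        exact ⟨p.1, (pv_eq_one_iff hbip).mp (h ▸ h1), by rw [← h2]⟩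
      · rintro ⟨u, hu, rfl⟩
        exact ⟨by rw [h]; exact (pv_eq_one_iff hbip).mpr hu, rfl⟩
    rw [this, Set.ncard_image_of_injective _ hinj]
    exact hY

end SC11
namespace SC11

variable {m : ℕ} {G : SimpleGraph α} {X Y : Set α}

theorem copy_conn (hbip : G.IsBipartition X Y) [Finite α] {S : Set (α × Fin (m + 3))}
    {k : ZMod 2 × Fin (m + 3)} (hlt : (S ∩ Cop X m k).ncard < G.vConn)
    {p q : α × Fin (m + 3)} (hp : p ∈ Cop X m k) (hpS : p ∉ S)
    (hq : q ∈ Cop X m k) (hqS : q ∉ S) :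
    ((G.tensorProd (cycleGraph (m + 3))).induce Sᶜ).Reachable ⟨p, hpS⟩ ⟨q, hqS⟩ := by
  classical
  set P := G.tensorProd (cycleGraph (m + 3)) with hP
  set T : Set α := Prod.fst '' (S ∩ Cop X m k) with hT
  have hTlt : T.ncard < G.vConn :=
    lt_of_le_of_lt (Set.ncard_image_le (Set.toFinite _)) hlt
  have hconn := induce_connected hTlt
  have hmemT : ∀ r : α × Fin (m + 3), r ∈ Cop X m k → r ∉ S → r.1 ∉ T := by
    rintro r hr hrS ⟨s, ⟨hsS, hsC⟩, hfst⟩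
    exact hrS (copy_uniq hsC hr hfst ▸ hsS)
  have key : ∀ (x y : ↑(Tᶜ)) (w : (G.induce Tᶜ).Walk x y),
      ∀ (p' q' : α × Fin (m + 3)) (hp1 : p' ∈ Cop X m k) (hp2 : p' ∉ S)
        (hq1 : q' ∈ Cop X m k) (hq2 : q' ∉ S), p'.1 = ↑x → q'.1 = ↑y →
        (P.induce Sᶜ).Reachable ⟨p', hp2⟩ ⟨q', hq2⟩ := by
    intro x y w
    induction w with
    | nil =>
      intro p' q' hp1 hp2 hq1 hq2 hx hy
      have : p' = q' := copy_uniq hp1 hq1 (hx.trans hy.symm)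
      subst this
      rfl
    | @cons x' y' z' had rest ih =>
      intro p' q' hp1 hp2 hq1 hq2 hx hy
      obtain ⟨r, hr1, hrfst⟩ := copy_pos (X := X) (↑y' : α) k
      have hrS : r ∉ S := by
        intro hrS
        exact y'.2 ⟨r, ⟨hrS, hr1⟩, hrfst⟩
      have hGadj : G.Adj p'.1 r.1 := by
        rw [hx, hrfst]
        exact had
      have hPadj : P.Adj p' r := copy_adj hbip hp1 hr1 hGadj
      have hstep : (P.induce Sᶜ).Adj ⟨p', hp2⟩ ⟨r, hrS⟩ := hPadj
      exact hstep.reachable.trans (ih r q' hr1 hrS hq1 hq2 hrfst hy)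
  have hpT := hmemT p hp hpS
  have hqT := hmemT q hq hqS
  obtain ⟨w⟩ := hconn.preconnected ⟨p.1, hpT⟩ ⟨q.1, hqT⟩
  exact key _ _ w p q hp hpS hq hqS rfl rfl

theorem nbhd_eq (p : α × Fin (m + 3)) :
    (G.tensorProd (cycleGraph (m + 3))).neighborSet p =
      (fun v : α => (v, p.2 - 1)) '' G.neighborSet p.1 ∪
      (fun v : α => (v, p.2 + 1)) '' G.neighborSet p.1 := by
  ext q
  constructor
  · rintro ⟨hG, hC⟩
    have hq2 : q.2 ∈ ({p.2 - 1, p.2 + 1} : Set (Fin (m + 3))) := by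
      rw [← cycleGraph_neighborSet (n := m + 1)]
      exact hC
    rcases hq2 with h | h
    · exact Or.inl ⟨q.1, hG, by rw [← h]⟩
    · exact Or.inr ⟨q.1, hG, by rw [← h]⟩
  · rintro (⟨v, hv, rfl⟩ | ⟨v, hv, rfl⟩)
    · exact ⟨hv, (cycleGraph_adj (n := m + 1)).mpr (Or.inl (sub_sub_cancel p.2 1))⟩
    · exact ⟨hv, (cycleGraph_adj (n := m + 1)).mpr (Or.inr (add_sub_cancel_left p.2 1))⟩

theorem nbhd_card [Finite α] (p : α × Fin (m + 3)) :
    ((G.tensorProd (cycleGraph (m + 3))).neighborSet p).ncard =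
      2 * (G.neighborSet p.1).ncard := by
  rw [nbhd_eq]
  have hinj1 : Function.Injective (fun v : α => (v, p.2 - 1)) :=
    fun a b h => congrArg Prod.fst h
  have hinj2 : Function.Injective (fun v : α => (v, p.2 + 1)) :=
    fun a b h => congrArg Prod.fst h
  have hdisj : Disjoint ((fun v : α => (v, p.2 - 1)) '' G.neighborSet p.1)
      ((fun v : α => (v, p.2 + 1)) '' G.neighborSet p.1) := by
    rw [Set.disjoint_left]
    rintro q ⟨v, hv, rfl⟩ ⟨v', hv', h'⟩
    have h2 := congrArg Prod.snd h'
    simp only at h2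
    exact two_ne_zero_fin (m := m) (by linear_combination h2)
  rw [Set.ncard_union_eq hdisj (Set.toFinite _) (Set.toFinite _),
    Set.ncard_image_of_injective _ hinj1, Set.ncard_image_of_injective _ hinj2]
  ring

end SC11
namespace SC11

variable {m : ℕ} {G : SimpleGraph α} {X Y : Set α}

theorem z2add2 : ∀ e : ZMod 2, e + 1 + 1 = e := by decide

theorem J_eq_of_mem {p : α × Fin (m + 3)} {k k' : ZMod 2 × Fin (m + 3)}
    (h : p ∈ J X m k) (h' : p ∈ J X m k') : k = k' :=
  Eq.trans (Eq.symm h) h'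

end SC11
/-- For a connected bipartite graph G with |X|,|Y| ≥ δ(G)+1, odd n ≥ 3 and
κ(G) > (2/n)·δ(G), the graph G × Cₙ is super connected. -/
theorem stmt_11 (G : SimpleGraph α) (X Y : Set α)
    (hGc : G.Connected) (hbip : G.IsBipartition X Y)
    (n : ℕ) (hn : 3 ≤ n) (hodd : Odd n)
    (hX : G.minDeg + 1 ≤ X.ncard) (hY : G.minDeg + 1 ≤ Y.ncard)
    (hk : 2 * G.minDeg < n * G.vConn) :
    (G.tensorProd (cycleGraph n)).SuperConnected := by
  classical
  obtain ⟨m, rfl⟩ : ∃ m, n = m + 3 := ⟨n - 3, by omega⟩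
  set P := G.tensorProd (cycleGraph (m + 3)) with hPdef
  -- finiteness of α
  have hXfin : X.Finite := by
    by_contra h
    rw [Set.Infinite.ncard h] at hX
    omega
  have hYfin : Y.Finite := by
    by_contra h
    rw [Set.Infinite.ncard h] at hY
    omega
  haveI hFin : Finite α := by
    rw [← Set.finite_univ_iff, ← hbip.2.1]
    exact hXfin.union hYfin
  have hXne : X.Nonempty := Set.nonempty_of_ncard_ne_zero (by omega)
  have hYne : Y.Nonempty := Set.nonempty_of_ncard_ne_zero (by omega)
  haveI hNe : Nonempty α := ⟨hXne.choose⟩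
  -- minimum degree positive
  obtain ⟨v0, hv0⟩ := SC11.exists_minDeg G
  have hδ1 : 1 ≤ G.minDeg := by
    by_contra h
    have hδ0 : (G.neighborSet v0).ncard = 0 := by omega
    have hNv0 : G.neighborSet v0 = ∅ := (Set.ncard_eq_zero (Set.toFinite _)).mp hδ0
    obtain ⟨x0, hx0⟩ := hXne
    obtain ⟨y0, hy0⟩ := hYne
    have hxy0 : x0 ≠ y0 := fun h' => Set.disjoint_left.mp hbip.1 (h' ▸ hx0) hy0
    have hw : ∃ w, w ≠ v0 := by
      by_cases h' : x0 = v0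
      · exact ⟨y0, fun hy => hxy0 (h'.trans hy.symm)⟩
      · exact ⟨x0, h'⟩
    obtain ⟨w, hwne⟩ := hw
    obtain ⟨wk⟩ := hGc.preconnected v0 w
    cases wk with
    | nil => exact hwne rfl
    | cons hadj _ =>
      rename_i y' _
      have : y' ∈ G.neighborSet v0 := hadj
      rw [hNv0] at this
      exact this
  -- vertex connectivity positive
  have hκ1 : 1 ≤ G.vConn := by
    rcases Nat.eq_zero_or_pos G.vConn with h | h
    · rw [h, mul_zero] at hk; omega
    · exact h
  -- cardinality of α
  have hcardα : 2 * G.minDeg + 2 ≤ Nat.card α := by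
    have h1 : (Set.univ : Set α).ncard = X.ncard + Y.ncard := by
      rw [← hbip.2.1, Set.ncard_union_eq hbip.1 hXfin hYfin]
    rw [Set.ncard_univ] at h1
    omega
  have hcardV : Nat.card (α × Fin (m + 3)) = Nat.card α * (m + 3) := by
    rw [Nat.card_prod]
    simp
  -- minimum degree of the product
  have hminP : P.minDeg = 2 * G.minDeg := by
    apply le_antisymm
    · apply Nat.sInf_le
      exact ⟨(v0, (0 : Fin (m + 3))), by rw [SC11.nbhd_card, hv0]⟩
    · obtain ⟨p0, hp0⟩ := SC11.exists_minDeg P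
      rw [← hp0, SC11.nbhd_card]
      have := SC11.minDeg_le G p0.1
      omega
  -- the neighborhood of a minimum degree vertex is a cut
  have hNPcard : (P.neighborSet (v0, (0 : Fin (m + 3)))).ncard = 2 * G.minDeg := by
    rw [SC11.nbhd_card, hv0]
  have hNPcut : ¬ (P.induce (P.neighborSet (v0, (0 : Fin (m + 3))))ᶜ).Connected := by
    set w0 : α × Fin (m + 3) := (v0, (0 : Fin (m + 3))) with hw0
    set NP := P.neighborSet w0 with hNPdef
    intro hconn
    have hbig : (NP ∪ {w0}).ncard < Nat.card (α × Fin (m + 3)) := by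
      have h1 : (NP ∪ {w0}).ncard ≤ NP.ncard + ({w0} : Set (α × Fin (m + 3))).ncard :=
        Set.ncard_union_le _ _
      rw [Set.ncard_singleton, hNPcard] at h1
      have h2 : (2 * G.minDeg + 2) * 3 ≤ Nat.card α * (m + 3) :=
        Nat.mul_le_mul hcardα (by omega)
      rw [hcardV]
      omega
    have hne : NP ∪ {w0} ≠ Set.univ := by
      intro h
      rw [h, Set.ncard_univ] at hbig
      omega
    obtain ⟨z, hz⟩ := (Set.ne_univ_iff_exists_notMem _).mp hne
    have hw0NP : w0 ∉ NP := fun h => P.irrefl h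
    have hzc : z ∈ NPᶜ := fun h => hz (Or.inl h)
    have hzw0 : z ≠ w0 := fun h => hz (Or.inr h)
    have hiso : ∀ (v : ↑(NPᶜ)) (wk : (P.induce NPᶜ).Walk ⟨w0, hw0NP⟩ v),
        v = ⟨w0, hw0NP⟩ := by
      intro v wk
      cases wk with
      | nil => rfl
      | cons hadj _ =>
        rename_i y' _
        exact absurd (hadj : P.Adj w0 ↑y') y'.2
    obtain ⟨wk⟩ := hconn.preconnected ⟨w0, hw0NP⟩ ⟨z, hzc⟩
    have := hiso _ wk
    exact hzw0 (congrArg Subtype.val this)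
  have hvConnP : P.vConn ≤ 2 * G.minDeg := by
    have := SC11.vConn_le hNPcut
    rw [hNPcard] at this
    exact this
  -- main part
  intro S hS
  obtain ⟨hcut, hcard⟩ := hS
  have hScard : S.ncard ≤ 2 * G.minDeg := hcard ▸ hvConnP
  have hSfin : S.Finite := Set.toFinite _
  have hprod3 : (2 * G.minDeg + 2) * 3 ≤ Nat.card α * (m + 3) :=
    Nat.mul_le_mul hcardα (by omega)
  -- a vertex outside S
  have hSneuniv : S ≠ Set.univ := by
    intro h
    rw [h, Set.ncard_univ, hcardV] at hScard
    omega
  obtain ⟨p1, hp1⟩ := (Set.ne_univ_iff_exists_notMem _).mp hSneuniv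
  haveI hPne : Nonempty ↑(Sᶜ) := ⟨⟨p1, hp1⟩⟩
  have hnotpre : ¬ (P.induce Sᶜ).Preconnected := by
    intro h
    exact hcut ⟨h⟩
  rw [SimpleGraph.Preconnected] at hnotpre
  push_neg at hnotpre
  obtain ⟨x, y, hxy⟩ := hnotpre
  -- reachability components
  set Df : ↑(Sᶜ) → Set (α × Fin (m + 3)) :=
    fun b => {q | ∃ hq : q ∉ S, (P.induce Sᶜ).Reachable b ⟨q, hq⟩} with hDf
  have hDmem : ∀ b : ↑(Sᶜ), ↑b ∈ Df b := by
    intro b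
    refine ⟨b.2, ?_⟩
    rw [Subtype.eta]
  have hDsub : ∀ (b : ↑(Sᶜ)) q, q ∈ Df b → q ∉ S := fun b q hq => hq.1
  have hDclose : ∀ (b : ↑(Sᶜ)) q r, q ∈ Df b → r ∉ S → P.Adj q r → r ∈ Df b := by
    rintro b q r ⟨hq, hrch⟩ hrS hadj
    exact ⟨hrS, hrch.trans (SimpleGraph.Adj.reachable
      (show (P.induce Sᶜ).Adj ⟨q, hq⟩ ⟨r, hrS⟩ from hadj))⟩
  have hDclose' : ∀ (b : ↑(Sᶜ)) q r (hqS : q ∉ S) (hrS : r ∉ S), q ∈ Df b →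
      (P.induce Sᶜ).Reachable ⟨q, hqS⟩ ⟨r, hrS⟩ → r ∈ Df b := by
    rintro b q r hqS hrS ⟨hq1, hrch⟩ h
    exact ⟨hrS, hrch.trans h⟩
  -- the key structural fact
  have main : ∀ b : ↑(Sᶜ), (∃ k0, Df b ∩ SC11.Cop X m k0 = ∅) →
      ∃ w, (P.neighborSet w).ncard = P.minDeg ∧ S = P.neighborSet w := by
    rintro b ⟨k0, hk0⟩
    set K : Set (ZMod 2 × Fin (m + 3)) := {k | (Df b ∩ SC11.Cop X m k).Nonempty} with hK
    have hk0K : k0 ∉ K := by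
      intro h
      rw [hK, Set.mem_setOf_eq, hk0] at h
      exact Set.not_nonempty_empty h
    have hKb : SC11.jf X m ↑b ∈ K := ⟨↑b, hDmem b, SC11.J_subset_Cop _ (SC11.mem_J_self _)⟩
    -- boundary copies
    have hbdryA : ∃ a, a ∈ K ∧ SC11.tg m a ∉ K := by
      by_contra h
      push_neg at h
      have hiter : ∀ t, (SC11.tg m)^[t] (SC11.jf X m ↑b) ∈ K := by
        intro t
        induction t with
        | zero => exact hKb
        | succ t ih => rw [Function.iterate_succ_apply']; exact h _ ih
      obtain ⟨t, ht⟩ := SC11.tg_surj hodd (SC11.jf X m ↑b) k0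
      exact hk0K (ht ▸ hiter t)
    have hbdryB : ∃ bb, bb ∈ K ∧ SC11.sg m bb ∉ K := by
      by_contra h
      push_neg at h
      have hiter : ∀ t, (SC11.sg m)^[t] (SC11.jf X m ↑b) ∈ K := by
        intro t
        induction t with
        | zero => exact hKb
        | succ t ih => rw [Function.iterate_succ_apply']; exact h _ ih
      obtain ⟨t, ht⟩ := SC11.sg_surj hodd (SC11.jf X m ↑b) k0
      exact hk0K (ht ▸ hiter t)
    obtain ⟨a, haK, htaK⟩ := hbdryA
    obtain ⟨bb, hbK, hsbK⟩ := hbdryB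
    have hJnotK : ∀ k, k ∉ K → Df b ∩ SC11.J X m k = ∅ := by
      intro k hkK
      rw [Set.eq_empty_iff_forall_notMem]
      rintro q ⟨hqD, hqJ⟩
      exact hkK ⟨q, hqD, SC11.J_subset_Cop _ hqJ⟩
    have hJnotK' : ∀ k, SC11.sg m k ∉ K → Df b ∩ SC11.J X m k = ∅ := by
      intro k hkK
      rw [Set.eq_empty_iff_forall_notMem]
      rintro q ⟨hqD, hqJ⟩
      exact hkK ⟨q, hqD, SC11.J_subset_Cop_sg _ hqJ⟩
    have hDCa : ∀ q, q ∈ Df b ∩ SC11.Cop X m a → q ∈ SC11.J X m a := by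
      rintro q ⟨hqD, hqC | hqC⟩
      · exfalso
        have h := hJnotK _ htaK
        rw [Set.eq_empty_iff_forall_notMem] at h
        exact h q ⟨hqD, hqC⟩
      · exact hqC
    have hDCb : ∀ q, q ∈ Df b ∩ SC11.Cop X m bb → q ∈ SC11.J X m (SC11.tg m bb) := by
      rintro q ⟨hqD, hqC | hqC⟩
      · exact hqC
      · exfalso
        have h := hJnotK' _ hsbK
        rw [Set.eq_empty_iff_forall_notMem] at h
        exact h q ⟨hqD, hqC⟩
    -- boundary degree bounds
    have hSboundA : ∀ (q : α × Fin (m + 3)) k, q ∈ Df b → q ∈ SC11.J X m (SC11.sg m k) →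
        Df b ∩ SC11.J X m k = ∅ → G.minDeg ≤ (S ∩ SC11.J X m k).ncard := by
      intro q k hqD hqJ hDJk
      have himg : (fun v : α => (v, k.2)) '' G.neighborSet q.1 ⊆ S ∩ SC11.J X m k := by
        rintro r ⟨v, hv, rfl⟩
        have hpvq : SC11.pv X q.1 = k.1 + 1 := (SC11.mem_J.mp hqJ).1
        have hpv : SC11.pv X v = k.1 := by
          rw [SC11.pv_opp hbip (hv : G.Adj q.1 v), hpvq, SC11.z2add2]
        have hrJ : (v, k.2) ∈ SC11.J X m k := SC11.mem_J.mpr ⟨hpv, rfl⟩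
        have hadj : P.Adj q (v, k.2) :=
          SC11.copy_adj hbip (SC11.J_subset_Cop _ hqJ) (SC11.J_subset_Cop_sg _ hrJ) hv
        have hrS : (v, k.2) ∈ S := by
          by_contra hrS
          have hmem : (v, k.2) ∈ Df b := hDclose b q _ hqD hrS hadj
          rw [Set.eq_empty_iff_forall_notMem] at hDJk
          exact hDJk _ ⟨hmem, hrJ⟩
        exact ⟨hrS, hrJ⟩
      calc G.minDeg ≤ (G.neighborSet q.1).ncard := SC11.minDeg_le G q.1
        _ = ((fun v : α => (v, k.2)) '' G.neighborSet q.1).ncard :=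
            (Set.ncard_image_of_injective _ (fun u1 u2 h => congrArg Prod.fst h)).symm
        _ ≤ (S ∩ SC11.J X m k).ncard := Set.ncard_le_ncard himg (Set.toFinite _)
    have hSboundB : ∀ (q : α × Fin (m + 3)) k, q ∈ Df b → q ∈ SC11.J X m k →
        Df b ∩ SC11.J X m (SC11.sg m k) = ∅ →
        G.minDeg ≤ (S ∩ SC11.J X m (SC11.sg m k)).ncard := by
      intro q k hqD hqJ hDJk
      have himg : (fun v : α => (v, k.2 + 1)) '' G.neighborSet q.1 ⊆
          S ∩ SC11.J X m (SC11.sg m k) := by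
        rintro r ⟨v, hv, rfl⟩
        have hpvq : SC11.pv X q.1 = k.1 := (SC11.mem_J.mp hqJ).1
        have hpv : SC11.pv X v = k.1 + 1 := by
          rw [SC11.pv_opp hbip (hv : G.Adj q.1 v), hpvq]
        have hrJ : (v, k.2 + 1) ∈ SC11.J X m (SC11.sg m k) := SC11.mem_J.mpr ⟨hpv, rfl⟩
        have hadj : P.Adj q (v, k.2 + 1) :=
          SC11.copy_adj hbip (SC11.J_subset_Cop_sg _ hqJ) (SC11.J_subset_Cop _ hrJ) hv
        have hrS : (v, k.2 + 1) ∈ S := by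
          by_contra hrS
          have hmem : (v, k.2 + 1) ∈ Df b := hDclose b q _ hqD hrS hadj
          rw [Set.eq_empty_iff_forall_notMem] at hDJk
          exact hDJk _ ⟨hmem, hrJ⟩
        exact ⟨hrS, hrJ⟩
      calc G.minDeg ≤ (G.neighborSet q.1).ncard := SC11.minDeg_le G q.1
        _ = ((fun v : α => (v, k.2 + 1)) '' G.neighborSet q.1).ncard :=
            (Set.ncard_image_of_injective _ (fun u1 u2 h => congrArg Prod.fst h)).symm
        _ ≤ (S ∩ SC11.J X m (SC11.sg m k)).ncard := Set.ncard_le_ncard himg (Set.toFinite _)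
    -- apply at the two boundaries
    obtain ⟨qa, hqaD, hqaC⟩ := haK
    have hqaJa : qa ∈ SC11.J X m a := hDCa qa ⟨hqaD, hqaC⟩
    have hqaJ : qa ∈ SC11.J X m (SC11.sg m (SC11.tg m a)) := by
      rw [SC11.sg_tg]; exact hqaJa
    have hSa : G.minDeg ≤ (S ∩ SC11.J X m (SC11.tg m a)).ncard :=
      hSboundA qa (SC11.tg m a) hqaD hqaJ (hJnotK _ htaK)
    obtain ⟨qb, hqbD, hqbC⟩ := hbK
    have hqbJ : qb ∈ SC11.J X m (SC11.tg m bb) := hDCb qb ⟨hqbD, hqbC⟩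
    have hSb : G.minDeg ≤ (S ∩ SC11.J X m bb).ncard := by
      have h1 : Df b ∩ SC11.J X m (SC11.sg m (SC11.tg m bb)) = ∅ := by
        rw [SC11.sg_tg]; exact hJnotK' bb hsbK
      have h2 := hSboundB qb (SC11.tg m bb) hqbD hqbJ h1
      rwa [SC11.sg_tg] at h2
    -- S is exactly split between the two boundary joints
    have htgab : SC11.tg m a ≠ bb := by
      intro h
      exact htaK (by rw [h]; exact ⟨qb, hqbD, hqbC⟩)
    have hdisjAB : Disjoint (S ∩ SC11.J X m (SC11.tg m a)) (S ∩ SC11.J X m bb) :=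
      Set.disjoint_of_subset Set.inter_subset_right Set.inter_subset_right
        (SC11.J_disjoint htgab)
    have hsubAB : (S ∩ SC11.J X m (SC11.tg m a)) ∪ (S ∩ SC11.J X m bb) ⊆ S :=
      Set.union_subset Set.inter_subset_left Set.inter_subset_left
    have hABcard : ((S ∩ SC11.J X m (SC11.tg m a)) ∪ (S ∩ SC11.J X m bb)).ncard =
        (S ∩ SC11.J X m (SC11.tg m a)).ncard + (S ∩ SC11.J X m bb).ncard :=
      Set.ncard_union_eq hdisjAB (Set.toFinite _) (Set.toFinite _)
    have hABle : (S ∩ SC11.J X m (SC11.tg m a)).ncard + (S ∩ SC11.J X m bb).ncard ≤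
        2 * G.minDeg := by
      rw [← hABcard]
      exact le_trans (Set.ncard_le_ncard hsubAB hSfin) hScard
    have hAeq : (S ∩ SC11.J X m (SC11.tg m a)).ncard = G.minDeg := by omega
    have hBeq : (S ∩ SC11.J X m bb).ncard = G.minDeg := by omega
    have hSeq : S = (S ∩ SC11.J X m (SC11.tg m a)) ∪ (S ∩ SC11.J X m bb) :=
      (Set.eq_of_subset_of_ncard_le hsubAB (by rw [hABcard]; omega) hSfin).symm
    have hS2 : S.ncard = 2 * G.minDeg := by rw [hSeq, hABcard]; omega
    -- barrier: copies meeting S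
    have hbar : ∀ k, (S ∩ SC11.Cop X m k).Nonempty →
        k = SC11.tg m a ∨ k = a ∨ k = bb ∨ k = SC11.sg m bb := by
      rintro k ⟨s, hsS, hsC⟩
      have hsJ : s ∈ (S ∩ SC11.J X m (SC11.tg m a)) ∪ (S ∩ SC11.J X m bb) := by
        rw [← hSeq]; exact hsS
      rcases hsC with hsC | hsC <;> rcases hsJ with ⟨_, hsJ⟩ | ⟨_, hsJ⟩
      · have h := SC11.J_eq_of_mem hsC hsJ
        right; left
        rw [← SC11.sg_tg (m := m) k, h, SC11.sg_tg]
      · have h := SC11.J_eq_of_mem hsC hsJ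
        right; right; right
        rw [← SC11.sg_tg (m := m) k, h]
      · exact Or.inl (SC11.J_eq_of_mem hsC hsJ)
      · exact Or.inr (Or.inr (Or.inl (SC11.J_eq_of_mem hsC hsJ)))
    have hbar' : ∀ k, k ≠ SC11.tg m a → k ≠ a → k ≠ bb → k ≠ SC11.sg m bb →
        S ∩ SC11.Cop X m k = ∅ := by
      intro k h1 h2 h3 h4
      rw [← Set.not_nonempty_iff_eq_empty]
      intro h
      rcases hbar k h with h' | h' | h' | h'
      exacts [h1 h', h2 h', h3 h', h4 h']
    -- full copies
    have hfull : ∀ k, k ∈ K → S ∩ SC11.Cop X m k = ∅ → SC11.Cop X m k ⊆ Df b := by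
      intro k hkK hSk
      obtain ⟨q, hqD, hqC⟩ := hkK
      intro r hrC
      have hSk' := Set.eq_empty_iff_forall_notMem.mp hSk
      have hrS : r ∉ S := fun h => hSk' r ⟨h, hrC⟩
      have hqS : q ∉ S := hDsub b q hqD
      have hlt : (S ∩ SC11.Cop X m k).ncard < G.vConn := by
        rw [hSk, Set.ncard_empty]; omega
      exact hDclose' b q r hqS hrS hqD (SC11.copy_conn hbip hlt hqC hqS hrC hrS)
    have hJne : ∀ k, (SC11.J X m k).Nonempty := by
      intro k
      apply Set.nonempty_of_ncard_ne_zero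
      have := SC11.le_J_card hbip hX hY (m := m) k
      omega
    by_cases hcase : bb = SC11.sg m a
    · -- the good case: the component is a single vertex
      subst hcase
      have hKsub : ∀ k, k ∈ K → k = a ∨ k = SC11.sg m a := by
        intro k hkK
        by_contra hknot
        push_neg at hknot
        obtain ⟨hk1, hk2⟩ := hknot
        have hkta : k ≠ SC11.tg m a := fun h => htaK (h ▸ hkK)
        have hkssa : k ≠ SC11.sg m (SC11.sg m a) := fun h => hsbK (h ▸ hkK)
        set Bar : ZMod 2 × Fin (m + 3) → Prop := fun k' =>
          k' = SC11.tg m a ∨ k' = a ∨ k' = SC11.sg m a ∨ k' = SC11.sg m (SC11.sg m a)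
          with hBar
        set d : ℕ → ZMod 2 × Fin (m + 3) := fun t => (SC11.tg m)^[t] k with hd
        have hdsucc : ∀ t, d (t + 1) = SC11.tg m (d t) := fun t =>
          Function.iterate_succ_apply' _ _ _
        have hdzero : d 0 = k := rfl
        have hex : ∃ t, Bar (d t) := by
          obtain ⟨t, ht⟩ := SC11.tg_surj hodd k a
          exact ⟨t, Or.inr (Or.inl ht)⟩
        have hspec : Bar (d (Nat.find hex)) := Nat.find_spec hex
        have hmin : ∀ t, t < Nat.find hex → ¬ Bar (d t) := fun t ht => Nat.find_min hex ht
        have hk_nbar : ¬ Bar k := by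
          rintro (h | h | h | h)
          exacts [hkta h, hk1 h, hk2 h, hkssa h]
        have ht0pos : 0 < Nat.find hex := by
          rcases Nat.eq_zero_or_pos (Nat.find hex) with h | h
          · exact absurd (by rwa [h, hdzero] at hspec) hk_nbar
          · exact h
        have hchain : ∀ t, t < Nat.find hex → d t ∈ K ∧ SC11.Cop X m (d t) ⊆ Df b := by
          intro t
          induction t with
          | zero =>
            intro _
            have hb0 : S ∩ SC11.Cop X m k = ∅ := hbar' k hkta hk1 hk2 hkssa
            exact ⟨hkK, hfull k hkK hb0⟩
          | succ t ih =>
            intro ht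
            obtain ⟨hKt, hsubD⟩ := ih (by omega)
            have hKt1 : d (t + 1) ∈ K := by
              obtain ⟨q, hqJ⟩ := hJne (d (t + 1))
              have hqJ' : q ∈ SC11.J X m (SC11.tg m (d t)) := by
                rw [← hdsucc t]; exact hqJ
              exact ⟨q, hsubD (SC11.Jtg_subset_Cop _ hqJ'), SC11.J_subset_Cop _ hqJ⟩
            have hnb : ¬ Bar (d (t + 1)) := hmin _ ht
            have hb1 : S ∩ SC11.Cop X m (d (t + 1)) = ∅ :=
              hbar' _ (fun h => hnb (Or.inl h)) (fun h => hnb (Or.inr (Or.inl h)))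
                (fun h => hnb (Or.inr (Or.inr (Or.inl h))))
                (fun h => hnb (Or.inr (Or.inr (Or.inr h))))
            exact ⟨hKt1, hfull _ hKt1 hb1⟩
        obtain ⟨t1, ht1⟩ : ∃ t1, Nat.find hex = t1 + 1 := ⟨Nat.find hex - 1, by omega⟩
        obtain ⟨hKt1', hsubD'⟩ := hchain t1 (by omega)
        have hKt0 : d (Nat.find hex) ∈ K := by
          obtain ⟨q, hqJ⟩ := hJne (d (Nat.find hex))
          have hqJ' : q ∈ SC11.J X m (SC11.tg m (d t1)) := by
            rw [← hdsucc t1, ← ht1]; exact hqJ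
          exact ⟨q, hsubD' (SC11.Jtg_subset_Cop _ hqJ'), SC11.J_subset_Cop _ hqJ⟩
        have hd1nbar : ¬ Bar (d t1) := hmin t1 (by omega)
        have hdt1eq : d t1 = SC11.sg m (d (Nat.find hex)) := by
          rw [ht1, hdsucc t1, SC11.sg_tg]
        rcases hspec with h | h | h | h
        · exact htaK (h ▸ hKt0)
        · apply hd1nbar
          rw [hdt1eq, h]
          exact Or.inr (Or.inr (Or.inl rfl))
        · apply hd1nbar
          rw [hdt1eq, h]
          exact Or.inr (Or.inr (Or.inr rfl))
        · exact hsbK (h ▸ hKt0)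
      -- the component is contained in the joint `a`
      have hDJa : Df b ⊆ SC11.J X m a := by
        intro q hqD
        have hk1 : SC11.jf X m q ∈ K :=
          ⟨q, hqD, SC11.J_subset_Cop _ (SC11.mem_J_self q)⟩
        have hk2 : SC11.sg m (SC11.jf X m q) ∈ K :=
          ⟨q, hqD, SC11.J_subset_Cop_sg _ (SC11.mem_J_self q)⟩
        rcases hKsub _ hk1 with h1 | h1
        · rw [← h1]; exact SC11.mem_J_self q
        · exfalso
          rcases hKsub _ hk2 with h2 | h2
          · rw [h1] at h2
            exact SC11.sg_sg_ne a h2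
          · rw [h1] at h2
            exact SC11.sg_ne (SC11.sg m a) (SC11.sg_inj h2 ▸ h2)
      -- vertices of the component are isolated in the induced graph
      have hisolated : ∀ (u v : ↑(Sᶜ)), ↑u ∈ Df b → ¬ (P.induce Sᶜ).Adj u v := by
        intro u v huD hadj
        have hadj' : P.Adj ↑u ↑v := hadj
        have hvD : (↑v : α × Fin (m + 3)) ∈ Df b := hDclose b ↑u ↑v huD v.2 hadj'
        have h1 := (SC11.mem_J.mp (hDJa huD)).2
        have h2 := (SC11.mem_J.mp (hDJa hvD)).2
        have hcyc := hadj'.2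
        rw [h1, h2] at hcyc
        exact (cycleGraph (m + 3)).irrefl hcyc
      have huniq : ∀ v : ↑(Sᶜ), (P.induce Sᶜ).Walk b v → v = b := by
        intro v wk
        cases wk with
        | nil => rfl
        | cons hadj _ => exact absurd hadj (hisolated b _ (hDmem b))
      have hsingle : ∀ q, q ∈ Df b → q = ↑b := by
        rintro q ⟨hq1, hrch⟩
        obtain ⟨wk⟩ := hrch
        exact congrArg Subtype.val (huniq _ wk)
      have hND : P.neighborSet ↑b ⊆ S := by
        intro z hz
        by_contra hzS
        have hzD : z ∈ Df b := hDclose b ↑b z (hDmem b) hzS hz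
        exact P.irrefl ((hsingle z hzD) ▸ hz)
      have hge : 2 * G.minDeg ≤ (P.neighborSet ↑b).ncard := by
        rw [SC11.nbhd_card]
        have := SC11.minDeg_le G (↑b : α × Fin (m + 3)).1
        omega
      have hSeqN : P.neighborSet ↑b = S :=
        Set.eq_of_subset_of_ncard_le hND (by rw [hS2]; exact hge) hSfin
      exact ⟨↑b, by rw [hminP, hSeqN, hS2], hSeqN.symm⟩
    · -- the impossible case: the two boundaries are far apart
      exfalso
      have hba : bb ≠ a := by
        intro h
        have h1 : qb ∈ SC11.J X m a := hDCa qb ⟨hqbD, by rw [← h]; exact hqbC⟩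
        have h2 : qb ∈ SC11.J X m (SC11.tg m a) := by rw [← h]; exact hqbJ
        exact SC11.tg_ne a (SC11.J_eq_of_mem h2 h1)
      have hsaK : SC11.sg m a ∈ K := ⟨qa, hqaD, SC11.J_subset_Cop_sg a hqaJa⟩
      set Bar : ZMod 2 × Fin (m + 3) → Prop := fun k' =>
        k' = SC11.tg m a ∨ k' = a ∨ k' = bb ∨ k' = SC11.sg m bb with hBar
      have hsanbar : ¬ Bar (SC11.sg m a) := by
        rintro (h | h | h | h)
        · exact SC11.sg_ne_tg a h
        · exact SC11.sg_ne a h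
        · exact hcase h.symm
        · exact hba (SC11.sg_inj h).symm
      set c : ℕ → ZMod 2 × Fin (m + 3) := fun t => (SC11.sg m)^[t] (SC11.sg m a) with hc
      have hcsucc : ∀ t, c (t + 1) = SC11.sg m (c t) := fun t =>
        Function.iterate_succ_apply' _ _ _
      have hczero : c 0 = SC11.sg m a := rfl
      have hex : ∃ t, Bar (c t) := by
        obtain ⟨t, ht⟩ := SC11.sg_surj hodd (SC11.sg m a) bb
        exact ⟨t, Or.inr (Or.inr (Or.inl ht))⟩
      have hspec : Bar (c (Nat.find hex)) := Nat.find_spec hex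
      have hmin : ∀ t, t < Nat.find hex → ¬ Bar (c t) := fun t ht => Nat.find_min hex ht
      have ht0pos : 0 < Nat.find hex := by
        rcases Nat.eq_zero_or_pos (Nat.find hex) with h | h
        · exact absurd (by rwa [h, hczero] at hspec) hsanbar
        · exact h
      have hchain : ∀ t, t < Nat.find hex → c t ∈ K ∧ SC11.Cop X m (c t) ⊆ Df b := by
        intro t
        induction t with
        | zero =>
          intro _
          have hb0 : S ∩ SC11.Cop X m (SC11.sg m a) = ∅ :=
            hbar' _ (fun h => hsanbar (Or.inl h)) (fun h => hsanbar (Or.inr (Or.inl h)))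
              (fun h => hsanbar (Or.inr (Or.inr (Or.inl h))))
              (fun h => hsanbar (Or.inr (Or.inr (Or.inr h))))
          exact ⟨hsaK, by rw [hczero]; exact hfull _ hsaK hb0⟩
        | succ t ih =>
          intro ht
          obtain ⟨hKt, hsubD⟩ := ih (by omega)
          have hKt1 : c (t + 1) ∈ K := by
            obtain ⟨q, hqJ⟩ := hJne (c t)
            refine ⟨q, hsubD (SC11.J_subset_Cop _ hqJ), ?_⟩
            rw [hcsucc t]
            exact SC11.J_subset_Cop_sg _ hqJ
          have hnb : ¬ Bar (c (t + 1)) := hmin _ ht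
          have hb1 : S ∩ SC11.Cop X m (c (t + 1)) = ∅ :=
            hbar' _ (fun h => hnb (Or.inl h)) (fun h => hnb (Or.inr (Or.inl h)))
              (fun h => hnb (Or.inr (Or.inr (Or.inl h))))
              (fun h => hnb (Or.inr (Or.inr (Or.inr h))))
          exact ⟨hKt1, hfull _ hKt1 hb1⟩
      obtain ⟨t1, ht1⟩ : ∃ t1, Nat.find hex = t1 + 1 := ⟨Nat.find hex - 1, by omega⟩
      obtain ⟨hKt1', hsubD'⟩ := hchain t1 (by omega)
      have hKt0 : c (Nat.find hex) ∈ K := by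
        obtain ⟨q, hqJ⟩ := hJne (c t1)
        refine ⟨q, hsubD' (SC11.J_subset_Cop _ hqJ), ?_⟩
        rw [ht1, hcsucc t1]
        exact SC11.J_subset_Cop_sg _ hqJ
      have hct1eq : c t1 = SC11.tg m (c (Nat.find hex)) := by
        rw [ht1, hcsucc t1, SC11.tg_sg]
      have hd1nbar : ¬ Bar (c t1) := hmin t1 (by omega)
      have hctb : c (Nat.find hex) = bb := by
        rcases hspec with h | h | h | h
        · exact absurd (h ▸ hKt0) htaK
        · exfalso
          apply hd1nbar
          rw [hct1eq, h]
          exact Or.inl rfl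
        · exact h
        · exact absurd (h ▸ hKt0) hsbK
      -- now the joint below bb is fully inside the component
      have hJtbD : SC11.J X m (SC11.tg m bb) ⊆ Df b := by
        intro q hq
        have hq' : q ∈ SC11.J X m (c t1) := by rw [hct1eq, hctb]; exact hq
        exact hsubD' (SC11.J_subset_Cop _ hq')
      have hzex : ∃ z, z ∈ SC11.J X m bb ∧ z ∉ S := by
        by_contra h'
        push_neg at h'
        have hsub : SC11.J X m bb ⊆ S ∩ SC11.J X m bb := fun z hz => ⟨h' z hz, hz⟩
        have hc1 := Set.ncard_le_ncard hsub (Set.toFinite _)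
        have hc2 := SC11.le_J_card hbip hX hY (m := m) bb
        omega
      obtain ⟨z, hzJ, hzS⟩ := hzex
      have hzD : z ∉ Df b := by
        intro h'
        exact hsbK ⟨z, h', SC11.J_subset_Cop_sg bb hzJ⟩
      have hdeg : (G.neighborSet z.1).ncard ≠ 0 := by
        have := SC11.minDeg_le G z.1
        omega
      obtain ⟨v, hv⟩ := Set.nonempty_of_ncard_ne_zero hdeg
      have hrJ : (v, (SC11.tg m bb).2) ∈ SC11.J X m (SC11.tg m bb) := by
        apply SC11.mem_J.mpr
        refine ⟨?_, rfl⟩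
        have h1 := SC11.pv_opp hbip (hv : G.Adj z.1 v)
        have h2 := (SC11.mem_J.mp hzJ).1
        rw [h1, h2]
        rfl
      have hadjzr : P.Adj z (v, (SC11.tg m bb).2) :=
        SC11.copy_adj hbip (SC11.J_subset_Cop bb hzJ) (SC11.Jtg_subset_Cop bb hrJ) hv
      have hrD : (v, (SC11.tg m bb).2) ∈ Df b := hJtbD hrJ
      exact hzD (hDclose b _ z hrD hzS hadjzr.symm)
  by_cases hx : ∃ k0, Df x ∩ SC11.Cop X m k0 = ∅
  · exact main x hx
  by_cases hy : ∃ k0, Df y ∩ SC11.Cop X m k0 = ∅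
  · exact main y hy
  exfalso
  push_neg at hx hy
  have hbad : ∀ k, G.vConn ≤ (S ∩ SC11.Cop X m k).ncard := by
    intro k
    by_contra hlt
    push_neg at hlt
    obtain ⟨qx, hqxD, hqxC⟩ := hx k
    obtain ⟨qy, hqyD, hqyC⟩ := hy k
    have h1 : qx ∉ S := hDsub x qx hqxD
    have h2 : qy ∉ S := hDsub y qy hqyD
    have hr := SC11.copy_conn hbip hlt hqxC h1 hqyC h2
    obtain ⟨hqx1, hrx⟩ := hqxD
    obtain ⟨hqy1, hry⟩ := hqyD
    exact hxy (hrx.trans (hr.trans hry.symm))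
  -- counting: every copy contains at least κ elements of S
  haveI : Fintype (α × Fin (m + 3)) := Fintype.ofFinite _
  set SF : Finset (α × Fin (m + 3)) := hSfin.toFinset with hSF
  have hJcard : ∀ k, (S ∩ SC11.J X m k).ncard =
      (SF.filter (fun p => SC11.jf X m p = k)).card := by
    intro k
    rw [← Set.ncard_coe_finset]
    congr 1
    ext p
    simp only [Finset.coe_filter, Set.mem_setOf_eq, Set.mem_inter_iff, hSF,
      Set.Finite.mem_toFinset]
    exact and_congr_right fun _ => Iff.rfl
  have hsumJ : ∑ k : ZMod 2 × Fin (m + 3), (S ∩ SC11.J X m k).ncard = S.ncard := by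
    have h1 : SF.card = ∑ k ∈ Finset.univ, (SF.filter (fun p => SC11.jf X m p = k)).card :=
      Finset.card_eq_sum_card_fiberwise (fun p _ => Finset.mem_univ (SC11.jf X m p))
    have h2 : S.ncard = SF.card := Set.ncard_eq_toFinset_card S hSfin
    rw [h2, h1]
    exact Finset.sum_congr rfl fun k _ => hJcard k
  have hCopcard : ∀ k, (S ∩ SC11.Cop X m k).ncard =
      (S ∩ SC11.J X m (SC11.tg m k)).ncard + (S ∩ SC11.J X m k).ncard := by
    intro k
    rw [show SC11.Cop X m k = SC11.J X m (SC11.tg m k) ∪ SC11.J X m k from rfl,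
      Set.inter_union_distrib_left]
    exact Set.ncard_union_eq
      (Set.disjoint_of_subset Set.inter_subset_right Set.inter_subset_right
        (SC11.J_disjoint (SC11.tg_ne k)))
      (Set.toFinite _) (Set.toFinite _)
  have htgEquiv : ∑ k : ZMod 2 × Fin (m + 3), (S ∩ SC11.J X m (SC11.tg m k)).ncard =
      ∑ k : ZMod 2 × Fin (m + 3), (S ∩ SC11.J X m k).ncard := by
    exact Equiv.sum_comp (⟨SC11.tg m, SC11.sg m, SC11.sg_tg, SC11.tg_sg⟩ :
      Equiv (ZMod 2 × Fin (m + 3)) (ZMod 2 × Fin (m + 3)))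
      (fun k => (S ∩ SC11.J X m k).ncard)
  have hsum2 : ∑ k : ZMod 2 × Fin (m + 3), (S ∩ SC11.Cop X m k).ncard = 2 * S.ncard := by
    rw [Finset.sum_congr rfl fun k _ => hCopcard k, Finset.sum_add_distrib,
      htgEquiv, hsumJ]
    ring
  have hcardI : Fintype.card (ZMod 2 × Fin (m + 3)) = 2 * (m + 3) := by
    simp [Fintype.card_prod]
  have hlb : Fintype.card (ZMod 2 × Fin (m + 3)) * G.vConn ≤
      ∑ k : ZMod 2 × Fin (m + 3), (S ∩ SC11.Cop X m k).ncard := by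
    have := Finset.card_nsmul_le_sum Finset.univ
      (fun k => (S ∩ SC11.Cop X m k).ncard) G.vConn (fun k _ => hbad k)
    rwa [smul_eq_mul, Finset.card_univ] at this
  rw [hsum2, hcardI] at hlb
  have hfin : 2 * ((m + 3) * G.vConn) ≤ 2 * S.ncard := by
    calc 2 * ((m + 3) * G.vConn) = 2 * (m + 3) * G.vConn := by ring
    _ ≤ 2 * S.ncard := hlb
  have hkk : 2 * G.minDeg < (m + 3) * G.vConn := hk
  omega
end

section
/- Let G be a connected non-bipartite graph and n ≥ 7 an odd integer. If κ(G × K_2) > (4/(n−1))·δ(G), then G × C_n is super connected. -/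
open SimpleGraph

universe u v

variable {α : Type u} {β : Type v}

open scoped Fin.NatCast Fin.IntCast Fin.CommRing
namespace StmtAux

open SimpleGraph Set

variable {α : Type u}

lemma vConn_le_of_cut (G : SimpleGraph α) {S : Set α} (h : G.IsVertexCut S) :
    G.vConn ≤ S.ncard :=
  Nat.sInf_le ⟨S, rfl, Or.inl h⟩

lemma minDeg_le_deg (G : SimpleGraph α) (v : α) :
    G.minDeg ≤ (G.neighborSet v).ncard :=
  Nat.sInf_le ⟨v, rfl⟩

lemma exists_minDeg (G : SimpleGraph α) [Nonempty α] :
    ∃ v, (G.neighborSet v).ncard = G.minDeg := by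
  have h : G.minDeg ∈ {d | ∃ v, (G.neighborSet v).ncard = d} :=
    Nat.sInf_mem ⟨(G.neighborSet (Classical.arbitrary α)).ncard, Classical.arbitrary α, rfl⟩
  exact h

lemma nonempty_of_not_colorable (G : SimpleGraph α) (hGb : ¬ G.Colorable 2) : Nonempty α := by
  by_contra h
  rw [not_nonempty_iff] at h
  exact hGb ⟨⟨fun v => (IsEmpty.elim h v), fun {a b} hab => (IsEmpty.elim h a)⟩⟩

lemma exists_edge (G : SimpleGraph α) (hGb : ¬ G.Colorable 2) : ∃ u w, G.Adj u w := by
  by_contra h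
  push_neg at h
  exact hGb ⟨⟨fun _ => 0, fun {a b} hab => absurd hab (h a b)⟩⟩

lemma exists_neighbor (G : SimpleGraph α) (hGc : G.Connected) (hGb : ¬ G.Colorable 2) (v : α) :
    ∃ w, G.Adj v w := by
  obtain ⟨u, w, huw⟩ := exists_edge G hGb
  obtain ⟨W⟩ := hGc.preconnected v u
  cases W with
  | nil => exact ⟨w, huw⟩
  | cons h _ => exact ⟨_, h⟩

lemma one_le_minDeg (G : SimpleGraph α) [Finite α] (hGc : G.Connected) (hGb : ¬ G.Colorable 2) :
    1 ≤ G.minDeg := by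
  have hne := nonempty_of_not_colorable G hGb
  refine le_csInf ⟨(G.neighborSet (Classical.choice hne)).ncard,
    Classical.choice hne, rfl⟩ ?_
  rintro d ⟨v, rfl⟩
  obtain ⟨w, hw⟩ := exists_neighbor G hGc hGb v
  rw [Nat.one_le_iff_ne_zero]
  intro h0
  rw [ncard_eq_zero (Set.toFinite _)] at h0
  exact absurd h0 (Set.nonempty_iff_ne_empty.mp ⟨w, hw⟩)

lemma deg_lt_card (G : SimpleGraph α) [Finite α] (v : α) :
    (G.neighborSet v).ncard < Nat.card α := by
  have hsub : G.neighborSet v ⊆ {v}ᶜ := by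
    intro w hw
    simp only [Set.mem_compl_iff, Set.mem_singleton_iff]
    rintro rfl
    exact G.loopless.irrefl _ hw
  calc (G.neighborSet v).ncard ≤ ({v}ᶜ : Set α).ncard := ncard_le_ncard hsub (Set.toFinite _)
    _ < (Set.univ : Set α).ncard := by
        refine ncard_lt_ncard ?_ (Set.toFinite _)
        rw [Set.ssubset_univ_iff]
        intro h
        have : v ∈ ({v}ᶜ : Set α) := h ▸ trivial
        simp at this
    _ = Nat.card α := by rw [Set.ncard_univ]

end StmtAux
namespace StmtAux

lemma cycle_propagate {n : ℕ} [NeZero n] (R : Set (Fin n)) (E : Fin n → Prop)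
    (hR : R.Nonempty) (hbase : ∀ r ∈ R, E r)
    (hstep : ∀ y : Fin n, E y → (y + 1) ∉ R → E (y + 1)) (j : Fin n) : E j := by
  classical
  by_cases hj : j ∈ R
  · exact hbase j hj
  · obtain ⟨r, hr⟩ := hR
    have hex : ∃ k : ℕ, j - (k : Fin n) ∈ R :=
      ⟨(j - r).val, by rwa [Fin.cast_val_eq_self, sub_sub_cancel]⟩
    set k0 := Nat.find hex with hk0def
    have hk0 : j - (k0 : Fin n) ∈ R := Nat.find_spec hex
    have hmin : ∀ t, t < k0 → j - (t : Fin n) ∉ R := fun t ht => Nat.find_min hex ht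
    have main : ∀ m, m ≤ k0 → E (j - ((k0 - m : ℕ) : Fin n)) := by
      intro m
      induction m with
      | zero => intro _; simpa using hbase _ hk0
      | succ m ih =>
        intro hm
        have h1 : E (j - ((k0 - m : ℕ) : Fin n)) := ih (Nat.le_of_succ_le hm)
        have harith : (k0 - m : ℕ) = (k0 - (m + 1)) + 1 := by omega
        have hcast : (j - ((k0 - (m + 1) : ℕ) : Fin n)) = (j - ((k0 - m : ℕ) : Fin n)) + 1 := by
          rw [harith]; push_cast; ring
        rw [hcast]
        refine hstep _ h1 ?_
        rw [← hcast]
        by_cases h0 : k0 - (m + 1) = 0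
        · rw [h0]; simpa using hj
        · exact hmin _ (by omega)
    have := main k0 le_rfl
    simpa using this

lemma boundary_of_not_mem {n : ℕ} [NeZero n] {J : Set (Fin n)} (hJ : J.Nonempty)
    {x : Fin n} (hx : x ∉ J) :
    (∃ b1 b2 : Fin n, b1 ≠ b2 ∧ b1 ∉ J ∧ b2 ∉ J ∧ (b1 + 1 ∈ J ∨ b1 - 1 ∈ J) ∧
      (b2 + 1 ∈ J ∨ b2 - 1 ∈ J)) ∨ (x + 1 ∈ J ∧ x - 1 ∈ J) := by
  classical
  obtain ⟨j, hj⟩ := hJ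
  have hexf : ∃ k : ℕ, x + (k : Fin n) ∈ J :=
    ⟨(j - x).val, by rwa [Fin.cast_val_eq_self, add_sub_cancel]⟩
  have hexb : ∃ k : ℕ, x - (k : Fin n) ∈ J :=
    ⟨(x - j).val, by rwa [Fin.cast_val_eq_self, sub_sub_cancel]⟩
  set k1 := Nat.find hexf with hk1def
  set k2 := Nat.find hexb with hk2def
  have hk1 : x + (k1 : Fin n) ∈ J := Nat.find_spec hexf
  have hk2 : x - (k2 : Fin n) ∈ J := Nat.find_spec hexb
  have hk1pos : 1 ≤ k1 := by
    rcases Nat.eq_zero_or_pos k1 with h | h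
    · exfalso; rw [h] at hk1; simp at hk1; exact hx hk1
    · exact h
  have hk2pos : 1 ≤ k2 := by
    rcases Nat.eq_zero_or_pos k2 with h | h
    · exfalso; rw [h] at hk2; simp at hk2; exact hx hk2
    · exact h
  have hk1le : k1 ≤ (j - x).val :=
    Nat.find_le (by rwa [Fin.cast_val_eq_self, add_sub_cancel])
  have hk2le : k2 ≤ (x - j).val :=
    Nat.find_le (by rwa [Fin.cast_val_eq_self, sub_sub_cancel])
  have hn1 : (j - x).val < n := (j - x).is_lt
  have hn2 : (x - j).val < n := (x - j).is_lt
  have hminf : ∀ t, t < k1 → x + (t : Fin n) ∉ J := fun t ht => Nat.find_min hexf ht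
  have hminb : ∀ t, t < k2 → x - (t : Fin n) ∉ J := fun t ht => Nat.find_min hexb ht
  clear_value k1 k2
  set b1 := x + ((k1 - 1 : ℕ) : Fin n) with hb1def
  set b2 := x - ((k2 - 1 : ℕ) : Fin n) with hb2def
  have hb1 : b1 ∉ J := hminf _ (by omega)
  have hb2 : b2 ∉ J := hminb _ (by omega)
  have hc1 : ((k1 - 1 : ℕ) : Fin n) + 1 = (k1 : Fin n) := by
    have : ((k1 - 1 : ℕ) + 1 : ℕ) = k1 := by omega
    rw [← this]; push_cast; ring
  have hc2 : ((k2 - 1 : ℕ) : Fin n) + 1 = (k2 : Fin n) := by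
    have : ((k2 - 1 : ℕ) + 1 : ℕ) = k2 := by omega
    rw [← this]; push_cast; ring
  have hb1J : b1 + 1 ∈ J := by
    have : b1 + 1 = x + (k1 : Fin n) := by rw [hb1def, add_assoc, hc1]
    rwa [this]
  have hb2J : b2 - 1 ∈ J := by
    have : b2 - 1 = x - (k2 : Fin n) := by
      rw [hb2def, sub_sub, hc2]
    rwa [this]
  by_cases hbb : b1 = b2
  · -- arithmetic dichotomy
    have hA : ((k1 - 1 : ℕ) : Fin n) + ((k2 - 1 : ℕ) : Fin n) = 0 := by
      have h := hbb
      rw [hb1def, hb2def, sub_eq_add_neg] at h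
      have h2 := add_left_cancel h
      rw [h2]; ring
    have hdvd : (n : ℕ) ∣ (k1 - 1) + (k2 - 1) := by
      rw [← Nat.cast_add, Fin.natCast_eq_zero] at hA
      exact hA
    obtain ⟨t, ht⟩ := hdvd
    have hnpos : 0 < n := Nat.pos_of_ne_zero (NeZero.ne n)
    have htle : t ≤ 1 := by
      by_contra hgt
      push_neg at hgt
      have : 2 * n ≤ n * t := by
        calc 2 * n = n * 2 := by ring
        _ ≤ n * t := Nat.mul_le_mul_left n hgt
      omega
    rcases Nat.eq_zero_or_pos t with ht0 | ht1
    · -- k1 = k2 = 1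
      rw [ht0, Nat.mul_zero] at ht
      have hk11 : k1 = 1 := by omega
      right
      constructor
      · rw [hk11] at hk1; simpa using hk1
      · have hk21 : k2 = 1 := by omega
        rw [hk21] at hk2; simpa using hk2
    · -- sum = n : contradiction, J would be empty
      exfalso
      have ht1' : t = 1 := by omega
      rw [ht1', Nat.mul_one] at ht
      have hsum : (k1 - 1) + (k2 - 1) = n := ht
      have hjm : x + (((j - x).val : ℕ) : Fin n) = j := by
        rw [Fin.cast_val_eq_self, add_sub_cancel]
      set m := (j - x).val with hmdef
      have hmlt : n - m < k2 := by omega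
      have hnotJ : x - ((n - m : ℕ) : Fin n) ∉ J := hminb _ hmlt
      have hcast : x - ((n - m : ℕ) : Fin n) = x + (m : Fin n) := by
        have hmn : (m : ℕ) + (n - m) = n := by omega
        have : ((m : ℕ) : Fin n) + ((n - m : ℕ) : Fin n) = 0 := by
          rw [← Nat.cast_add, hmn, Fin.natCast_self]
        have hneg : ((n - m : ℕ) : Fin n) = -((m : ℕ) : Fin n) := by
          rw [eq_neg_iff_add_eq_zero, add_comm]; exact this
        rw [hneg, sub_neg_eq_add]
      rw [hcast, hjm] at hnotJ
      exact hnotJ hj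
  · exact Or.inl ⟨b1, b2, hbb, hb1, hb2, Or.inl hb1J, Or.inr hb2J⟩

lemma two_boundary {n : ℕ} [NeZero n] {J : Set (Fin n)} (hJ : J.Nonempty) {x1 x2 : Fin n}
    (h12 : x1 ≠ x2) (h1 : x1 ∉ J) (h2 : x2 ∉ J) :
    ∃ r1 r2 : Fin n, r1 ≠ r2 ∧ r1 ∉ J ∧ r2 ∉ J ∧ (r1 + 1 ∈ J ∨ r1 - 1 ∈ J) ∧
      (r2 + 1 ∈ J ∨ r2 - 1 ∈ J) := by
  rcases boundary_of_not_mem hJ h1 with h | hx1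
  · exact h
  rcases boundary_of_not_mem hJ h2 with h | hx2
  · exact h
  exact ⟨x1, x2, h12, h1, h2, Or.inl hx1.1, Or.inl hx2.1⟩

end StmtAux
namespace StmtAux

open SimpleGraph Set

lemma fin2_ne {x y : Fin 2} (h : x ≠ y) : (x = 0 ∧ y = 1) ∨ (x = 1 ∧ y = 0) := by
  revert h; revert x y; decide

lemma fin2_cases (e : Fin 2) : e = 0 ∨ e = 1 := by revert e; decide

lemma fin_val_one {n : ℕ} [NeZero n] (hn : 7 ≤ n) : ((1 : Fin n)).val = 1 := by
  rw [← Nat.cast_one, Fin.val_natCast]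
  exact Nat.mod_eq_of_lt (by omega)

lemma fin_one_ne_zero {n : ℕ} [NeZero n] (hn : 7 ≤ n) : (1 : Fin n) ≠ 0 := by
  intro h
  rw [← Nat.cast_one, Fin.natCast_eq_zero] at h
  have := Nat.le_of_dvd one_pos h
  omega

lemma fin_succ_ne_self {n : ℕ} [NeZero n] (hn : 7 ≤ n) (i : Fin n) : i ≠ i + 1 := by
  intro h
  have h1 : (1 : Fin n) = 0 := (left_eq_add.mp h)
  exact fin_one_ne_zero hn h1

lemma cycle_adj_succ {n : ℕ} [NeZero n] (hn : 7 ≤ n) (i : Fin n) :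
    (cycleGraph n).Adj i (i + 1) := by
  rw [cycleGraph_adj']
  right
  have : i + 1 - i = 1 := by ring
  rw [this, fin_val_one hn]

lemma cycle_adj_iff {n : ℕ} [NeZero n] (hn : 7 ≤ n) {x y : Fin n} :
    (cycleGraph n).Adj x y ↔ (y = x + 1 ∨ x = y + 1) := by
  rw [cycleGraph_adj']
  have hval : ∀ z w : Fin n, (z - w).val = 1 ↔ z = w + 1 := by
    intro z w
    constructor
    · intro h
      have : z - w = 1 := Fin.ext (by rw [fin_val_one hn]; exact h)
      rw [sub_eq_iff_eq_add] at this
      rw [this]; ring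
    · intro h
      rw [h]
      have : w + 1 - w = 1 := by ring
      rw [this, fin_val_one hn]
  rw [hval, hval]
  tauto

lemma ncard_prod_pair {γ δ : Type*} [Finite γ] [Finite δ] (s : Set γ) {x y : δ} (hxy : x ≠ y) :
    (s ×ˢ ({x, y} : Set δ)).ncard = 2 * s.ncard := by
  have h1 : s ×ˢ ({x, y} : Set δ) = (fun a => (a, x)) '' s ∪ (fun a => (a, y)) '' s := by
    ext ⟨a, b⟩
    simp only [Set.mem_prod, Set.mem_insert_iff, Set.mem_singleton_iff, Set.mem_union,
      Set.mem_image, Prod.mk.injEq]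
    constructor
    · rintro ⟨ha, rfl | rfl⟩
      · exact Or.inl ⟨a, ha, rfl, rfl⟩
      · exact Or.inr ⟨a, ha, rfl, rfl⟩
    · rintro (⟨c, hc, rfl, rfl⟩ | ⟨c, hc, rfl, rfl⟩)
      · exact ⟨hc, Or.inl rfl⟩
      · exact ⟨hc, Or.inr rfl⟩
  have hinj1 : Function.Injective (fun a : γ => (a, x)) := fun a b h => (Prod.ext_iff.mp h).1
  have hinj2 : Function.Injective (fun a : γ => (a, y)) := fun a b h => (Prod.ext_iff.mp h).1
  have hdisj : Disjoint ((fun a => (a, x)) '' s) ((fun a => (a, y)) '' s) := by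
    rw [Set.disjoint_left]
    rintro ⟨a, b⟩ ⟨c, hc, hce⟩ ⟨e, he, hee⟩
    rw [Prod.mk.injEq] at hce hee
    exact hxy (hce.2.trans hee.2.symm)
  rw [h1, Set.ncard_union_eq hdisj (Set.toFinite _) (Set.toFinite _),
    Set.ncard_image_of_injective _ hinj1, Set.ncard_image_of_injective _ hinj2]
  ring

lemma layers_sum {α : Type u} {n : ℕ} [NeZero n] [Finite α] (S : Set (α × Fin n)) :
    ∑ i : Fin n, {a : α | (a, i) ∈ S}.ncard = S.ncard := by
  classical
  haveI : Fintype α := Fintype.ofFinite α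
  have hS : S.Finite := Set.toFinite S
  rw [Set.ncard_eq_toFinset_card S hS,
    Finset.card_eq_sum_card_fiberwise (f := Prod.snd) (t := Finset.univ)
      (fun x _ => Finset.mem_univ _)]
  refine Finset.sum_congr rfl ?_
  intro i _
  have himg : (hS.toFinset.filter fun x => x.2 = i) =
      Finset.image (fun a => (a, i)) (({a : α | (a, i) ∈ S}).toFinite.toFinset) := by
    ext ⟨a, j⟩
    simp only [Finset.mem_filter, Set.Finite.mem_toFinset, Finset.mem_image,
      Set.mem_setOf_eq, Prod.mk.injEq]
    constructor
    · rintro ⟨hmem, rfl⟩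
      exact ⟨a, hmem, rfl, rfl⟩
    · rintro ⟨b, hb, rfl, rfl⟩
      exact ⟨hb, rfl⟩
  rw [himg, Finset.card_image_of_injective _ (fun a b h => (Prod.ext_iff.mp h).1),
    ← Set.ncard_eq_toFinset_card]

lemma sum_shift {n : ℕ} [NeZero n] (f : Fin n → ℕ) :
    ∑ i : Fin n, f (i + 1) = ∑ i : Fin n, f i :=
  Fintype.sum_equiv (Equiv.addRight 1) _ _ (fun _ => rfl)

end StmtAux
namespace StmtAux

open SimpleGraph Set

lemma pair_cut {α : Type u} {n : ℕ} [NeZero n] (hn : 7 ≤ n) [Finite α] (G : SimpleGraph α)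
    (S : Set (α × Fin n)) (i : Fin n)
    (c' d' : α × Fin n) (hc' : c' ∈ Sᶜ) (hd' : d' ∈ Sᶜ)
    (hcl : c'.2 = i ∨ c'.2 = i + 1) (hdl : d'.2 = i ∨ d'.2 = i + 1)
    (hnr : ¬ ((G.tensorProd (cycleGraph n)).induce Sᶜ).Reachable ⟨c', hc'⟩ ⟨d', hd'⟩) :
    (G.tensorProd (⊤ : SimpleGraph (Fin 2))).vConn ≤
      {a : α | (a, i) ∈ S}.ncard + {a : α | (a, i + 1) ∈ S}.ncard := by
  classical
  have hii : i ≠ i + 1 := fin_succ_ne_self hn i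
  set ψ : α × Fin 2 → α × Fin n := fun p => (p.1, if p.2 = 0 then i else i + 1) with hψ
  have hψ0 : ∀ a : α, ψ (a, 0) = (a, i) := by
    intro a; rw [hψ]; simp
  have hψ1 : ∀ a : α, ψ (a, 1) = (a, i + 1) := by
    intro a; rw [hψ]
    show (a, if (1 : Fin 2) = 0 then i else i + 1) = (a, i + 1)
    rw [if_neg (by decide : ¬ (1 : Fin 2) = 0)]
  set T : Set (α × Fin 2) := ψ ⁻¹' S with hT
  have hinj0 : Function.Injective (fun a : α => (a, (0 : Fin 2))) :=
    fun a b h => congrArg Prod.fst h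
  have hinj1 : Function.Injective (fun a : α => (a, (1 : Fin 2))) :=
    fun a b h => congrArg Prod.fst h
  have hcut : (G.tensorProd (⊤ : SimpleGraph (Fin 2))).IsVertexCut T := by
    intro hconn
    obtain ⟨ce, hce⟩ : ∃ e : Fin 2, ψ (c'.1, e) = c' := by
      rcases hcl with h | h
      · exact ⟨0, by rw [hψ0]; exact Prod.ext_iff.mpr ⟨rfl, h.symm⟩⟩
      · exact ⟨1, by rw [hψ1]; exact Prod.ext_iff.mpr ⟨rfl, h.symm⟩⟩
    obtain ⟨de, hde⟩ : ∃ e : Fin 2, ψ (d'.1, e) = d' := by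
      rcases hdl with h | h
      · exact ⟨0, by rw [hψ0]; exact Prod.ext_iff.mpr ⟨rfl, h.symm⟩⟩
      · exact ⟨1, by rw [hψ1]; exact Prod.ext_iff.mpr ⟨rfl, h.symm⟩⟩
    have hcT : (c'.1, ce) ∈ Tᶜ := by
      simp only [hT, Set.mem_compl_iff, Set.mem_preimage, hce]
      exact hc'
    have hdT : (d'.1, de) ∈ Tᶜ := by
      simp only [hT, Set.mem_compl_iff, Set.mem_preimage, hde]
      exact hd'
    have hreach := hconn.preconnected ⟨(c'.1, ce), hcT⟩ ⟨(d'.1, de), hdT⟩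
    let F : ((G.tensorProd (⊤ : SimpleGraph (Fin 2))).induce Tᶜ) →g
        ((G.tensorProd (cycleGraph n)).induce Sᶜ) :=
      ⟨fun p => ⟨ψ p.1, p.2⟩, by
        rintro ⟨p, hp⟩ ⟨q, hq⟩ hadj
        obtain ⟨hG, hne2⟩ := hadj
        refine ⟨hG, ?_⟩
        rcases fin2_ne hne2 with ⟨h1, h2⟩ | ⟨h1, h2⟩
        · show (cycleGraph n).Adj (ψ p).2 (ψ q).2
          have hp2 : ψ p = (p.1, i) := by
            rw [(Prod.ext_iff.mpr ⟨rfl, h1⟩ : p = (p.1, 0))]; exact hψ0 p.1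
          have hq2 : ψ q = (q.1, i + 1) := by
            rw [(Prod.ext_iff.mpr ⟨rfl, h2⟩ : q = (q.1, 1))]; exact hψ1 q.1
          rw [hp2, hq2]
          exact cycle_adj_succ hn i
        · show (cycleGraph n).Adj (ψ p).2 (ψ q).2
          have hp2 : ψ p = (p.1, i + 1) := by
            rw [(Prod.ext_iff.mpr ⟨rfl, h1⟩ : p = (p.1, 1))]; exact hψ1 p.1
          have hq2 : ψ q = (q.1, i) := by
            rw [(Prod.ext_iff.mpr ⟨rfl, h2⟩ : q = (q.1, 0))]; exact hψ0 q.1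
          rw [hp2, hq2]
          exact (cycle_adj_succ hn i).symm⟩
    have hmap := Reachable.map F hreach
    have he1 : F ⟨(c'.1, ce), hcT⟩ = (⟨c', hc'⟩ : (Sᶜ : Set (α × Fin n))) := Subtype.ext hce
    have he2 : F ⟨(d'.1, de), hdT⟩ = (⟨d', hd'⟩ : (Sᶜ : Set (α × Fin n))) := Subtype.ext hde
    rw [he1, he2] at hmap
    exact hnr hmap
  have hT2 : T = (fun a => (a, (0 : Fin 2))) '' {a : α | (a, i) ∈ S} ∪
      (fun a => (a, (1 : Fin 2))) '' {a : α | (a, i + 1) ∈ S} := by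
    ext ⟨a, e⟩
    rcases fin2_cases e with rfl | rfl
    · constructor
      · intro h
        refine Or.inl ⟨a, ?_, rfl⟩
        have : ψ (a, 0) ∈ S := h
        rwa [hψ0] at this
      · rintro (⟨b, hb, heq⟩ | ⟨b, hb, heq⟩)
        · injection heq with h1 h2
          show ψ (a, 0) ∈ S
          rw [hψ0]; exact h1 ▸ hb
        · injection heq with h1 h2
          exact absurd h2 (by decide)
    · constructor
      · intro h
        refine Or.inr ⟨a, ?_, rfl⟩
        have : ψ (a, 1) ∈ S := h
        rwa [hψ1] at this
      · rintro (⟨b, hb, heq⟩ | ⟨b, hb, heq⟩)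
        · injection heq with h1 h2
          exact absurd h2 (by decide)
        · injection heq with h1 h2
          show ψ (a, 1) ∈ S
          rw [hψ1]; exact h1 ▸ hb
  have hdisj : Disjoint ((fun a => (a, (0 : Fin 2))) '' {a : α | (a, i) ∈ S})
      ((fun a => (a, (1 : Fin 2))) '' {a : α | (a, i + 1) ∈ S}) := by
    rw [Set.disjoint_left]
    rintro ⟨a, b⟩ ⟨c, hc, hce⟩ ⟨e, he, hee⟩
    injection hce with hc1 hc2
    injection hee with he1 he2
    rw [← hc2] at he2
    exact absurd he2 (by decide)
  have hcard : T.ncard = {a : α | (a, i) ∈ S}.ncard + {a : α | (a, i + 1) ∈ S}.ncard := by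
    rw [hT2, Set.ncard_union_eq hdisj (Set.toFinite _) (Set.toFinite _),
      Set.ncard_image_of_injective _ hinj0, Set.ncard_image_of_injective _ hinj1]
  calc (G.tensorProd (⊤ : SimpleGraph (Fin 2))).vConn ≤ T.ncard := vConn_le_of_cut _ hcut
    _ = _ := hcard

end StmtAux
namespace StmtAux

open SimpleGraph Set

lemma first_step {V : Type v} (H : SimpleGraph V) {u w : V} (h : H.Reachable u w)
    (hne : u ≠ w) : ∃ z, H.Adj u z := by
  obtain ⟨W⟩ := h
  cases W with
  | nil => exact absurd rfl hne
  | cons h _ => exact ⟨_, h⟩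

end StmtAux

open StmtAux in
/-- For a connected non-bipartite graph G and odd n ≥ 7, if
κ(G × K₂) > (4/(n-1))·δ(G), then G × Cₙ is super connected. -/
theorem stmt_14 (G : SimpleGraph α) (hGc : G.Connected) (hGb : ¬ G.Colorable 2)
    (n : ℕ) (hn : 7 ≤ n) (hodd : Odd n)
    (hk : 4 * G.minDeg < (n - 1) * (G.tensorProd (⊤ : SimpleGraph (Fin 2))).vConn) :
    (G.tensorProd (cycleGraph n)).SuperConnected := by
  classical
  haveI : NeZero n := ⟨by omega⟩
  set B := G.tensorProd (⊤ : SimpleGraph (Fin 2)) with hB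
  set P := G.tensorProd (cycleGraph n) with hP
  set δ := G.minDeg with hδdef
  intro S hS
  -- dispatch the infinite case
  rcases finite_or_infinite α with hfin | hinf
  swap
  · exfalso
    have h0 : B.vConn = 0 := by
      have hmem : (0 : ℕ) ∈ {m | ∃ T : Set (α × Fin 2), T.ncard = m ∧
          (B.IsVertexCut T ∨ Nat.card (α × Fin 2) ≤ m + 1)} := by
        refine ⟨∅, by simp, Or.inr ?_⟩
        have hc0 : Nat.card (α × Fin 2) = 0 := by
          haveI : Infinite (α × Fin 2) := Prod.infinite_of_left
          exact Nat.card_eq_zero_of_infinite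
        omega
      exact Nat.le_zero.mp (Nat.sInf_le hmem)
    rw [h0, Nat.mul_zero] at hk
    omega
  haveI := hfin
  have hnea : Nonempty α := nonempty_of_not_colorable G hGb
  obtain ⟨a0, ha0⟩ := exists_minDeg G
  have hδ1 : 1 ≤ δ := one_le_minDeg G hGc hGb
  have hδlt : δ < Nat.card α := by
    rw [hδdef, ← ha0]; exact deg_lt_card G a0
  have hdegge : ∀ v, δ ≤ (G.neighborSet v).ncard := minDeg_le_deg G
  have hPadj : ∀ (p q : α × Fin n), P.Adj p q ↔
      G.Adj p.1 q.1 ∧ (q.2 = p.2 + 1 ∨ p.2 = q.2 + 1) := by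
    intro p q
    exact and_congr Iff.rfl (cycle_adj_iff hn)
  have hPneigh : ∀ (a : α) (z : Fin n),
      P.neighborSet (a, z) = (G.neighborSet a) ×ˢ ({z - 1, z + 1} : Set (Fin n)) := by
    intro a z
    ext ⟨b, w⟩
    rw [mem_neighborSet, hPadj]
    simp only [Set.mem_prod, mem_neighborSet, Set.mem_insert_iff, Set.mem_singleton_iff]
    constructor
    · rintro ⟨h1, h2 | h2⟩
      · exact ⟨h1, Or.inr h2⟩
      · refine ⟨h1, Or.inl ?_⟩
        rw [h2]; ring
    · rintro ⟨h1, h2 | h2⟩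
      · refine ⟨h1, Or.inr ?_⟩
        rw [h2]; ring
      · exact ⟨h1, Or.inl h2⟩
  have hzz : ∀ z : Fin n, (z - 1 : Fin n) ≠ z + 1 := by
    intro z h
    have h2 : ((2 : ℕ) : Fin n) = 0 := by
      have hzero : (z + 1) - (z - 1) = 0 := by rw [← h]; ring
      calc ((2 : ℕ) : Fin n) = (z + 1) - (z - 1) := by push_cast; ring
        _ = 0 := hzero
    rw [Fin.natCast_eq_zero] at h2
    have := Nat.le_of_dvd (by omega) h2
    omega
  have hPcard : ∀ (a : α) (z : Fin n),
      (P.neighborSet (a, z)).ncard = 2 * (G.neighborSet a).ncard := by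
    intro a z
    rw [hPneigh, ncard_prod_pair _ (hzz z)]
  have hminP : P.minDeg = 2 * δ := by
    apply le_antisymm
    · have h := minDeg_le_deg P (a0, (0 : Fin n))
      rwa [hPcard, ha0] at h
    · refine le_csInf ⟨_, (a0, (0 : Fin n)), rfl⟩ ?_
      rintro e ⟨⟨a, z⟩, rfl⟩
      rw [hPcard]
      exact Nat.mul_le_mul_left 2 (hdegge a)
  -- vConn P ≤ 2δ
  have hPv : P.vConn ≤ 2 * δ := by
    have h30 : ((3 : ℕ) : Fin n) ≠ (0 : Fin n) := by
      intro h
      rw [Fin.natCast_eq_zero] at h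
      have := Nat.le_of_dvd (by omega) h
      omega
    have hx : ((a0, (0 : Fin n)) : α × Fin n) ∈ (P.neighborSet (a0, (0 : Fin n)))ᶜ :=
      fun h => P.loopless.irrefl _ h
    have hy : ((a0, ((3 : ℕ) : Fin n)) : α × Fin n) ∈ (P.neighborSet (a0, (0 : Fin n)))ᶜ :=
      fun h => G.loopless.irrefl a0 ((hPadj _ _).mp h).1
    have hcut : P.IsVertexCut (P.neighborSet (a0, (0 : Fin n))) := by
      intro hconn
      have hne : (⟨(a0, (0 : Fin n)), hx⟩ : ((P.neighborSet (a0, (0 : Fin n)))ᶜ : Set (α × Fin n)))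
          ≠ ⟨(a0, ((3 : ℕ) : Fin n)), hy⟩ := by
        intro h
        exact h30 (congrArg (fun t => t.val.2) h).symm
      obtain ⟨z, hz⟩ := first_step _ (hconn.preconnected _ _) hne
      exact z.2 hz
    have := vConn_le_of_cut P hcut
    rwa [hPcard, ha0] at this
  have hScut : P.IsVertexCut S := hS.1
  have hScard : S.ncard ≤ 2 * δ := by rw [hS.2]; exact hPv
  have hκ : 1 ≤ B.vConn := by
    rcases Nat.eq_zero_or_pos B.vConn with h | h
    · rw [h, Nat.mul_zero] at hk; omega
    · exact h
  have hcardV : Nat.card (α × Fin n) = Nat.card α * n := by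
    rw [Nat.card_prod, Nat.card_eq_fintype_card (α := Fin n), Fintype.card_fin]
  have hone : 1 ≤ Nat.card α := Nat.card_pos
  -- S is not everything
  have hSne : Sᶜ.Nonempty := by
    by_contra h
    rw [Set.not_nonempty_iff_eq_empty, Set.compl_empty_iff] at h
    rw [h, Set.ncard_univ, hcardV] at hScard
    have hq : 2 * Nat.card α ≤ Nat.card α * n := by
      calc 2 * Nat.card α = Nat.card α * 2 := by ring
        _ ≤ Nat.card α * n := Nat.mul_le_mul_left _ (by omega)
    omega
  haveI hQne : Nonempty (Sᶜ : Set (α × Fin n)) := hSne.to_subtype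
  set Q := P.induce Sᶜ with hQ
  obtain ⟨c, d, hcd⟩ : ∃ c d : (Sᶜ : Set (α × Fin n)), ¬ Q.Reachable c d := by
    by_contra h
    push_neg at h
    exact hScut ⟨h⟩
  set K : (Sᶜ : Set (α × Fin n)) → Set (α × Fin n) :=
    fun c0 => {y | ∃ h : y ∈ Sᶜ, Q.Reachable c0 ⟨y, h⟩} with hK
  have hKself : ∀ c0 : (Sᶜ : Set (α × Fin n)), c0.val ∈ K c0 := by
    intro c0
    refine ⟨c0.2, ?_⟩
    rw [Subtype.coe_eta]
  have hKsub : ∀ c0, K c0 ⊆ Sᶜ := by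
    rintro c0 y ⟨h, _⟩
    exact h
  have hKclose : ∀ (c0 : (Sᶜ : Set (α × Fin n))) (y z : α × Fin n),
      y ∈ K c0 → z ∈ Sᶜ → P.Adj y z → z ∈ K c0 := by
    rintro c0 y z ⟨hy, hr⟩ hz hadj
    exact ⟨hz, hr.trans (Adj.reachable hadj)⟩
  have hKreach_ne : ∀ (c0 : (Sᶜ : Set (α × Fin n))) (y z : α × Fin n)
      (hy' : y ∈ Sᶜ) (hz' : z ∈ Sᶜ), y ∈ K c0 → z ∉ K c0 →
      ¬ Q.Reachable ⟨y, hy'⟩ ⟨z, hz'⟩ := by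
    rintro c0 y z hy' hz' ⟨hy, hr⟩ hzK hr2
    exact hzK ⟨hz', hr.trans hr2⟩
  set Sl : Fin n → Set α := fun j => {a | (a, j) ∈ S} with hSl
  have hSsum : ∑ j : Fin n, (Sl j).ncard = S.ncard := layers_sum S
  -- the component dichotomy
  have hcomp : ∀ c0 : (Sᶜ : Set (α × Fin n)),
      (∃ v, (P.neighborSet v).ncard = P.minDeg ∧ S = P.neighborSet v) ∨
      (∃ i0 : Fin n, ∀ j : Fin n, j ≠ i0 → ∃ a, (a, j) ∈ K c0) := by
    intro c0
    by_cases hsin : ∀ y ∈ K c0, y.2 = c0.val.2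
    · -- K c0 is a single vertex, S is its neighbourhood
      left
      have hKone : ∀ y ∈ K c0, y = c0.val := by
        intro y hy
        by_contra hne
        obtain ⟨hy', hr⟩ := hy
        have hne' : c0 ≠ ⟨y, hy'⟩ := fun h => hne (congrArg Subtype.val h).symm
        obtain ⟨z, hz⟩ := first_step Q hr hne'
        have hzK : z.val ∈ K c0 := ⟨z.2, by rw [Subtype.coe_eta]; exact hz.reachable⟩
        have hz2 := hsin z.val hzK
        rcases ((hPadj _ _).mp hz).2 with h | h
        · exact fin_succ_ne_self hn _ (hz2.symm.trans h)
        · exact fin_succ_ne_self hn _ (h.trans (congrArg (· + 1) hz2))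
      have hNS : P.neighborSet c0.val ⊆ S := by
        intro z hz
        by_contra hzS
        have hzK : z ∈ K c0 := hKclose c0 c0.val z (hKself c0) hzS hz
        have hzc := hKone z hzK
        rw [hzc] at hz
        exact P.loopless.irrefl _ hz
      have hNcard : (P.neighborSet c0.val).ncard = 2 * (G.neighborSet c0.val.1).ncard := by
        have : c0.val = (c0.val.1, c0.val.2) := rfl
        rw [this, hPcard]
      have hge : 2 * δ ≤ (P.neighborSet c0.val).ncard := by
        rw [hNcard]
        exact Nat.mul_le_mul_left 2 (hdegge _)
      have hle : (P.neighborSet c0.val).ncard ≤ S.ncard :=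
        Set.ncard_le_ncard hNS (Set.toFinite _)
      have hEq : P.neighborSet c0.val = S :=
        Set.eq_of_subset_of_ncard_le hNS (by omega) (Set.toFinite _)
      refine ⟨c0.val, ?_, hEq.symm⟩
      rw [hminP]
      omega
    · -- K c0 misses at most one layer, or contradiction
      push_neg at hsin
      obtain ⟨y0, hy0K, hy0ne⟩ := hsin
      by_cases hgap : ∃ i0 : Fin n, ∀ j : Fin n, j ≠ i0 → ∃ a, (a, j) ∈ K c0
      · exact Or.inr hgap
      exfalso
      push_neg at hgap
      set J : Set (Fin n) := {j | ∃ a, (a, j) ∈ K c0} with hJ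
      have hJne : c0.val.2 ∈ J := ⟨c0.val.1, by rw [Prod.mk.eta]; exact hKself c0⟩
      obtain ⟨x1, hx1ne, hx1⟩ := hgap c0.val.2
      obtain ⟨x2, hx2ne, hx2⟩ := hgap x1
      have hx1J : x1 ∉ J := by rintro ⟨a, ha⟩; exact hx1 a ha
      have hx2J : x2 ∉ J := by rintro ⟨a, ha⟩; exact hx2 a ha
      obtain ⟨r1, r2, hr12, hr1J, hr2J, hr1b, hr2b⟩ :=
        two_boundary ⟨c0.val.2, hJne⟩ hx2ne hx2J hx1J
      have hSr : ∀ r : Fin n, r ∉ J → ((r + 1) ∈ J ∨ (r - 1) ∈ J) →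
          δ ≤ (Sl r).ncard := by
        rintro r hrJ (⟨a, haK⟩ | ⟨a, haK⟩)
        · have hsub : G.neighborSet a ⊆ Sl r := by
            intro u hu
            by_contra huS
            have hadj : P.Adj (a, r + 1) (u, r) := by
              rw [hPadj]
              exact ⟨hu, Or.inr rfl⟩
            have : (u, r) ∈ K c0 := hKclose c0 _ _ haK huS hadj
            exact hrJ ⟨u, this⟩
          calc δ ≤ (G.neighborSet a).ncard := hdegge a
            _ ≤ (Sl r).ncard := Set.ncard_le_ncard hsub (Set.toFinite _)
        · have hsub : G.neighborSet a ⊆ Sl r := by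
            intro u hu
            by_contra huS
            have hadj : P.Adj (a, r - 1) (u, r) := by
              rw [hPadj]
              refine ⟨hu, Or.inl ?_⟩
              ring
            have : (u, r) ∈ K c0 := hKclose c0 _ _ haK huS hadj
            exact hrJ ⟨u, this⟩
          calc δ ≤ (G.neighborSet a).ncard := hdegge a
            _ ≤ (Sl r).ncard := Set.ncard_le_ncard hsub (Set.toFinite _)
      have hr1δ : δ ≤ (Sl r1).ncard := hSr r1 hr1J hr1b
      have hr2δ : δ ≤ (Sl r2).ncard := hSr r2 hr2J hr2b
      have hsum12 : (Sl r1).ncard + (Sl r2).ncard ≤ S.ncard := by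
        rw [← hSsum]
        have h := Finset.sum_le_sum_of_subset
          (Finset.subset_univ ({r1, r2} : Finset (Fin n)))
          (f := fun j => (Sl j).ncard)
        rwa [Finset.sum_pair hr12] at h
      have hSlzero : ∀ j : Fin n, j ≠ r1 → j ≠ r2 → Sl j = ∅ := by
        intro j h1 h2
        have hsum3 : (Sl r1).ncard + (Sl r2).ncard + (Sl j).ncard ≤ S.ncard := by
          rw [← hSsum]
          have hsub : ({r1, r2, j} : Finset (Fin n)) ⊆ Finset.univ := Finset.subset_univ _
          have h := Finset.sum_le_sum_of_subset hsub (f := fun j => (Sl j).ncard)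
          have he : ∑ i ∈ ({r1, r2, j} : Finset (Fin n)), (Sl i).ncard =
              (Sl r1).ncard + (Sl r2).ncard + (Sl j).ncard := by
            rw [Finset.sum_insert (by
                simp only [Finset.mem_insert, Finset.mem_singleton]
                push_neg
                exact ⟨hr12, fun hh => h1 hh.symm⟩),
              Finset.sum_pair (fun hh => h2 hh.symm : r2 ≠ j)]
            ring
          rwa [he] at h
        have : (Sl j).ncard = 0 := by omega
        exact (Set.ncard_eq_zero (Set.toFinite _)).mp this
      set D : Set (α × Fin n) := Sᶜ \ K c0 with hD
      have hDclose : ∀ (y z : α × Fin n), y ∈ D → z ∈ Sᶜ → P.Adj y z → z ∈ D := by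
        rintro y z ⟨hySc, hyK⟩ hz hadj
        exact ⟨hz, fun hzK => hyK (hKclose c0 z y hzK hySc hadj.symm)⟩
      have hDr : ∀ r : Fin n, r ∉ J → (Sl r).ncard ≤ δ → ∃ a, (a, r) ∈ D := by
        intro r hrJ hrle
        obtain ⟨a, ha⟩ : ∃ a, a ∉ Sl r := by
          by_contra h
          push_neg at h
          have huniv : Sl r = Set.univ := Set.eq_univ_of_forall h
          rw [huniv, Set.ncard_univ] at hrle
          omega
        exact ⟨a, ⟨ha, fun hK => hrJ ⟨a, hK⟩⟩⟩
      have hDr1 : ∃ a, (a, r1) ∈ D := hDr r1 hr1J (by omega)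
      have hDr2 : ∃ a, (a, r2) ∈ D := hDr r2 hr2J (by omega)
      have hprop : ∀ j : Fin n, ∃ a, (a, j) ∈ D := by
        refine cycle_propagate ({r1, r2} : Set (Fin n)) (fun j => ∃ a, (a, j) ∈ D)
          ⟨r1, by simp⟩ ?_ ?_
        · rintro r hr
          rcases hr with rfl | hr
          · exact hDr1
          · rw [Set.mem_singleton_iff] at hr
            subst hr
            exact hDr2
        · rintro y ⟨a, haD⟩ hyR
          obtain ⟨u, hu⟩ := exists_neighbor G hGc hGb a
          have hy1 : Sl (y + 1) = ∅ := by
            refine hSlzero _ (fun h => hyR ?_) (fun h => hyR ?_)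
            · rw [h]; exact Set.mem_insert _ _
            · rw [h]; exact Set.mem_insert_of_mem _ rfl
          have hnotS : (u, y + 1) ∈ Sᶜ := by
            intro hmem
            have : u ∈ Sl (y + 1) := hmem
            rw [hy1] at this
            exact this
          refine ⟨u, hDclose (a, y) (u, y + 1) haD hnotS ?_⟩
          rw [hPadj]
          exact ⟨hu, Or.inl rfl⟩
      -- an edge of K c0 between consecutive layers
      obtain ⟨j, hjK, hj1K⟩ : ∃ j : Fin n, (∃ a, (a, j) ∈ K c0) ∧ (∃ b, (b, j + 1) ∈ K c0) := by
        obtain ⟨hy0', hr0⟩ := hy0K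
        have hne' : c0 ≠ ⟨y0, hy0'⟩ := fun h =>
          hy0ne (congrArg (fun t : (Sᶜ : Set (α × Fin n)) => t.val.2) h).symm
        obtain ⟨z, hz⟩ := first_step Q hr0 hne'
        have hzK : z.val ∈ K c0 := ⟨z.2, by rw [Subtype.coe_eta]; exact hz.reachable⟩
        have hcK : c0.val ∈ K c0 := hKself c0
        rcases ((hPadj _ _).mp hz).2 with h | h
        · have h' : z.val.2 = c0.val.2 + 1 := h
          refine ⟨c0.val.2, ⟨c0.val.1, by rw [Prod.mk.eta]; exact hcK⟩,
            ⟨z.val.1, ?_⟩⟩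
          rw [← h', Prod.mk.eta]
          exact hzK
        · have h' : c0.val.2 = z.val.2 + 1 := h
          refine ⟨z.val.2, ⟨z.val.1, by rw [Prod.mk.eta]; exact hzK⟩,
            ⟨c0.val.1, ?_⟩⟩
          rw [← h', Prod.mk.eta]
          exact hcK
      obtain ⟨aK, haK⟩ := hjK
      obtain ⟨bK, hbK⟩ := hj1K
      have hjJ : j ∈ J := ⟨aK, haK⟩
      have hj1J : (j + 1) ∈ J := ⟨bK, hbK⟩
      have hj0 : Sl j = ∅ :=
        hSlzero j (fun h => hr1J (h ▸ hjJ)) (fun h => hr2J (h ▸ hjJ))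
      have hj10 : Sl (j + 1) = ∅ :=
        hSlzero (j + 1) (fun h => hr1J (h ▸ hj1J)) (fun h => hr2J (h ▸ hj1J))
      obtain ⟨aD, haD⟩ := hprop j
      have hps := pair_cut hn G S j (aK, j) (aD, j) (hKsub c0 haK) haD.1
        (Or.inl rfl) (Or.inl rfl)
        (hKreach_ne c0 (aK, j) (aD, j) (hKsub c0 haK) haD.1 haK haD.2)
      have hps' : B.vConn ≤ (Sl j).ncard + (Sl (j + 1)).ncard := hps
      rw [hj0, hj10, Set.ncard_empty] at hps'
      omega
  -- conclude
  rcases hcomp c with hdone | ⟨ic, hic⟩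
  · exact hdone
  rcases hcomp d with hdone | ⟨idl, hid⟩
  · exact hdone
  exfalso
  have hdisjcd : ∀ y : α × Fin n, y ∈ K c → y ∈ K d → False := by
    rintro y ⟨h1, hr1⟩ ⟨h2, hr2⟩
    exact hcd (hr1.trans hr2.symm)
  have hmix : ∀ i : Fin n, B.vConn ≤ (Sl i).ncard + (Sl (i + 1)).ncard := by
    intro i
    have hii : i ≠ i + 1 := fin_succ_ne_self hn i
    obtain ⟨p, hpK, hpl⟩ : ∃ p : α × Fin n, p ∈ K c ∧ (p.2 = i ∨ p.2 = i + 1) := by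
      rcases eq_or_ne i ic with rfl | hne
      · obtain ⟨a, ha⟩ := hic (i + 1) (fun h => hii h.symm)
        exact ⟨(a, i + 1), ha, Or.inr rfl⟩
      · obtain ⟨a, ha⟩ := hic i hne
        exact ⟨(a, i), ha, Or.inl rfl⟩
    obtain ⟨q, hqK, hql⟩ : ∃ q : α × Fin n, q ∈ K d ∧ (q.2 = i ∨ q.2 = i + 1) := by
      rcases eq_or_ne i idl with rfl | hne
      · obtain ⟨a, ha⟩ := hid (i + 1) (fun h => hii h.symm)
        exact ⟨(a, i + 1), ha, Or.inr rfl⟩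
      · obtain ⟨a, ha⟩ := hid i hne
        exact ⟨(a, i), ha, Or.inl rfl⟩
    exact pair_cut hn G S i p q (hKsub c hpK) (hKsub d hqK) hpl hql
      (hKreach_ne c p q (hKsub c hpK) (hKsub d hqK) hpK
        (fun hq' => hdisjcd q hq' hqK))
  have hsum1 : n * B.vConn ≤ ∑ i : Fin n, ((Sl i).ncard + (Sl (i + 1)).ncard) := by
    calc n * B.vConn = ∑ _i : Fin n, B.vConn := by
          rw [Finset.sum_const, Finset.card_univ, Fintype.card_fin, smul_eq_mul]
      _ ≤ _ := Finset.sum_le_sum (fun i _ => hmix i)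
  have hsum2 : ∑ i : Fin n, ((Sl i).ncard + (Sl (i + 1)).ncard) = 2 * S.ncard := by
    rw [Finset.sum_add_distrib, sum_shift (fun i => (Sl i).ncard), hSsum]
    ring
  have hfinal : (n - 1) * B.vConn ≤ n * B.vConn :=
    Nat.mul_le_mul_right _ (by omega)
  omega
end
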